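/- arXiv:1603.04632 — 4 statements merged into one kernel-verified Lean document; each statement's English description precedes it below -/
import Mathlib

section
/- Let N be a level-1 phylogenetic network on a finite leaf set X and let Y ⊆ X with |Y| ≥ 2. Then there exists a unique interior vertex v of N such that Y is contained in the offspring set F(v) of v, but Y is not contained in F(v') for any child v' of v. Moreover, there exist two distinct elements x, y ∈ Y such that v equals the corresponding unique vertex for the pair {x,y}. -/
/-- A rooted phylogenetic network on leaf set `X`: a rooted DAG whose leaves are
identified with `X`, with no vertex of indegree one and outdegree one. -/
structure PhyloNetwork (X : Type) [Fintype X] [DecidableEq X] where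
  V : Type
  [instFin : Fintype V]
  [instDec : DecidableEq V]
  adj : V → V → Prop
  root : V
  leaf : X → V
  acyclic : ∀ v : V, ¬ Relation.TransGen adj v v
  root_no_in : ∀ u : V, ¬ adj u root
  connected : ∀ v : V, Relation.ReflTransGen adj root v
  leaf_inj : Function.Injective leaf
  leaf_no_out : ∀ (x : X) (w : V), ¬ adj (leaf x) w
  leaves_only : ∀ v : V, (∀ w : V, ¬ adj v w) → v = root ∨ ∃ x, leaf x = v
  no_inout_one : ∀ v : V, ¬ ((∃! u : V, adj u v) ∧ (∃! w : V, adj v w))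

namespace PhyloNetwork

variable {X : Type} [Fintype X] [DecidableEq X]

/-- Reachability by a directed path. -/
def reaches (N : PhyloNetwork X) : N.V → N.V → Prop := Relation.ReflTransGen N.adj

/-- The offspring set of a vertex: all leaves below it. -/
def F (N : PhyloNetwork X) (v : N.V) : Set X := {x | N.reaches v (N.leaf x)}

/-- `v` is a leaf vertex. -/
def IsLeafV (N : PhyloNetwork X) (v : N.V) : Prop := ∃ x, N.leaf x = v

/-- `v` is a lowest common ancestor of the set `Y` of leaves. -/
def IsLca (N : PhyloNetwork X) (Y : Finset X) (v : N.V) : Prop :=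
  (∀ x ∈ Y, x ∈ N.F v) ∧ ∀ w : N.V, N.adj v w → ¬ (∀ x ∈ Y, x ∈ N.F w)

/-- A cycle of a (level-1) network: two edge-disjoint, internally vertex-disjoint
directed paths from a root `r` to a hybrid `h`, with at least 3 vertices in total.
`side1` and `side2` list the internal vertices of the two sides in order. -/
structure NCycle (N : PhyloNetwork X) where
  r : N.V
  h : N.V
  side1 : List N.V
  side2 : List N.V
  chain1 : List.Chain N.adj r (side1 ++ [h])
  chain2 : List.Chain N.adj r (side2 ++ [h])
  ne : r ≠ h
  nodup1 : (r :: (side1 ++ [h])).Nodup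
  nodup2 : (r :: (side2 ++ [h])).Nodup
  disj : ∀ v ∈ side1, v ∉ side2
  nontriv : side1 ≠ [] ∨ side2 ≠ []

/-- The vertex set of a cycle. -/
def NCycle.verts {N : PhyloNetwork X} (C : NCycle N) : Set N.V :=
  {C.r, C.h} ∪ {v | v ∈ C.side1} ∪ {v | v ∈ C.side2}

/-- A level-1 network: every vertex belongs to at most one cycle. -/
def IsLevelOne (N : PhyloNetwork X) : Prop :=
  ∀ C C' : NCycle N, ∀ v : N.V, v ∈ C.verts → v ∈ C'.verts → C.verts = C'.verts

/-- `R(C)`: the leaves below the root of the cycle `C`. -/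
def NCycle.RC {N : PhyloNetwork X} (C : NCycle N) : Set X := N.F C.r

/-- `H(C)`: the leaves below the hybrid of the cycle `C`. -/
def NCycle.HC {N : PhyloNetwork X} (C : NCycle N) : Set X := N.F C.h

/-- `v` is the last ancestor `v_C(x)` of the leaf `x` lying in the cycle `C`. -/
def NCycle.LastAnc {N : PhyloNetwork X} (C : NCycle N) (v : N.V) (x : X) : Prop :=
  v ∈ C.verts ∧ N.reaches v (N.leaf x) ∧
    ∀ w ∈ C.verts, N.reaches w (N.leaf x) → N.reaches w v

end PhyloNetwork

/-- A symbolic 3-dissimilarity on `X` with values in `M ∪ {⊙}` (`⊙` = `none`):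
singletons get `⊙`, sets of size 2 or 3 get values in `M`. -/
structure SymbolicDissim3 (X M : Type) [DecidableEq X] where
  val : Finset X → Option M
  singleton_none : ∀ A : Finset X, A.card = 1 → val A = none
  pair_some : ∀ A : Finset X, A.card = 2 ∨ A.card = 3 → val A ≠ none

/-- The labelled network `(N,t)` represents `δ`: for every `Y ⊆ X` of size 2 or 3,
`δ(Y) = t(lca_N(Y))`. -/
def PhyloNetwork.Represents {X M : Type} [Fintype X] [DecidableEq X]
    (N : PhyloNetwork X) (t : N.V → M) (d : SymbolicDissim3 X M) : Prop :=
  ∀ Y : Finset X, Y.card = 2 ∨ Y.card = 3 → ∀ v : N.V, N.IsLca Y v → d.val Y = some (t v)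

/-- `δ` is level-1 representable. -/
def SymbolicDissim3.LevelOneRepresentable {X M : Type} [Fintype X] [DecidableEq X]
    (d : SymbolicDissim3 X M) : Prop :=
  ∃ (N : PhyloNetwork X) (t : N.V → M), N.IsLevelOne ∧ N.Represents t d

section LcaAux

namespace PhyloNetwork

variable {X : Type} [Fintype X] [DecidableEq X] {N : PhyloNetwork X}

private lemma transGen_of_ne {a b : N.V} (h : N.reaches a b) (hne : b ≠ a) :
    Relation.TransGen N.adj a b := by
  rcases Relation.reflTransGen_iff_eq_or_transGen.mp h with h' | h'
  · exact absurd h' hne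
  · exact h'

private lemma reaches_antisymm {a b : N.V} (h1 : N.reaches a b) (h2 : N.reaches b a) :
    a = b := by
  by_contra hne
  exact N.acyclic a ((transGen_of_ne h1 (fun e => hne e.symm)).trans (transGen_of_ne h2 hne))

private lemma exists_child {a b : N.V} (h : Relation.TransGen N.adj a b) :
    ∃ c, N.adj a c ∧ N.reaches c b := by
  induction h using Relation.TransGen.head_induction_on with
  | single h => exact ⟨b, h, Relation.ReflTransGen.refl⟩
  | head h' h _ => exact ⟨_, h', h.to_reflTransGen⟩

private lemma exists_top (S : Set N.V) (hS : S.Nonempty) :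
    ∃ m ∈ S, ∀ x ∈ S, N.reaches x m → x = m := by
  haveI : Fintype N.V := N.instFin
  haveI : IsTrans N.V (Relation.TransGen N.adj) := ⟨fun _ _ _ h1 h2 => h1.trans h2⟩
  haveI : IsIrrefl N.V (Relation.TransGen N.adj) := ⟨N.acyclic⟩
  obtain ⟨m, hm, hmin⟩ := (Finite.wellFounded_of_trans_of_irrefl
      (Relation.TransGen N.adj)).has_min S hS
  refine ⟨m, hm, fun x hx hr => ?_⟩
  by_contra hne
  exact hmin x hx (transGen_of_ne hr (fun e => hne e.symm))

private lemma exists_bot (S : Set N.V) (hS : S.Nonempty) :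
    ∃ m ∈ S, ∀ x ∈ S, N.reaches m x → m = x := by
  haveI : Fintype N.V := N.instFin
  haveI : IsTrans N.V (fun a b : N.V => Relation.TransGen N.adj b a) :=
    ⟨fun _ _ _ h1 h2 => h2.trans h1⟩
  haveI : IsIrrefl N.V (fun a b : N.V => Relation.TransGen N.adj b a) := ⟨N.acyclic⟩
  obtain ⟨m, hm, hmin⟩ := (Finite.wellFounded_of_trans_of_irrefl
      (fun a b : N.V => Relation.TransGen N.adj b a)).has_min S hS
  refine ⟨m, hm, fun x hx hr => ?_⟩
  by_contra hne
  exact hmin x hx (transGen_of_ne hr (fun e => hne e.symm))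

private lemma chain_reach : ∀ (l : List N.V) {a b : N.V},
    List.Chain N.adj a (l ++ [b]) → ∀ z ∈ a :: (l ++ [b]), N.reaches a z ∧ N.reaches z b := by
  intro l
  induction l with
  | nil =>
    intro a b hc z hz
    rw [List.nil_append] at hc; unfold List.Chain at hc; rw [List.isChain_pair] at hc
    rcases List.mem_cons.mp hz with rfl | hz
    · exact ⟨Relation.ReflTransGen.refl, Relation.ReflTransGen.single hc⟩
    · rw [List.nil_append, List.mem_singleton] at hz
      subst hz
      exact ⟨Relation.ReflTransGen.single hc, Relation.ReflTransGen.refl⟩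
  | cons c t ih =>
    intro a b hc z hz
    rw [List.cons_append] at hc; unfold List.Chain at hc; rw [List.isChain_cons_cons] at hc
    obtain ⟨hac, hct⟩ := hc
    rcases List.mem_cons.mp hz with rfl | hz
    · exact ⟨Relation.ReflTransGen.refl,
        Relation.ReflTransGen.head hac (ih hct c List.mem_cons_self).2⟩
    · obtain ⟨h1, h2⟩ := ih hct z hz
      exact ⟨Relation.ReflTransGen.head hac h1, h2⟩

private lemma mem_cons_append {z a : N.V} {l l' : List N.V} (h : z ∈ a :: l) :
    z ∈ a :: (l ++ l') := by
  rcases List.mem_cons.mp h with rfl | h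
  · exact List.mem_cons_self
  · exact List.mem_cons_of_mem _ (List.mem_append_left _ h)

private lemma exists_nodup_path {a b : N.V} (h : Relation.TransGen N.adj a b) :
    ∃ l : List N.V, List.Chain N.adj a (l ++ [b]) ∧ (a :: (l ++ [b])).Nodup := by
  induction h using Relation.TransGen.head_induction_on with
  | single h =>
    rename_i a'
    have hab : a' ≠ b := by rintro rfl; exact N.acyclic a' (Relation.TransGen.single h)
    exact ⟨[], by unfold List.Chain; simpa using h, by simp [hab]⟩
  | head h' hcb ihh =>
    rename_i a' c
    obtain ⟨l, hc, hnd⟩ := ihh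
    by_cases ha : a' ∈ c :: (l ++ [b])
    · have hab : a' ≠ b := by
        rintro rfl; exact N.acyclic a' ((Relation.TransGen.single h').trans hcb)
      have ha' : a' ∈ c :: l := by
        rcases List.mem_cons.mp ha with rfl | h2
        · exact List.mem_cons_self
        · rcases List.mem_append.mp h2 with h3 | h3
          · exact List.mem_cons_of_mem _ h3
          · rw [List.mem_singleton] at h3; exact absurd h3 hab
      obtain ⟨p, s, hsplit⟩ := List.append_of_mem ha'
      have hsuf : (a' :: (s ++ [b])) <:+ (c :: (l ++ [b])) := by
        refine ⟨p, ?_⟩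
        have := congrArg (· ++ [b]) hsplit
        simp only [List.cons_append, List.append_assoc] at this ⊢
        exact this.symm
      have h1 : List.IsChain N.adj (c :: (l ++ [b])) := hc
      exact ⟨s, h1.suffix hsuf, hnd.sublist hsuf.sublist⟩
    · exact ⟨c :: l, List.Chain.cons h' hc, List.nodup_cons.mpr ⟨ha, hnd⟩⟩

private lemma buildCycle (r v w h : N.V) (A B : List N.V)
    (TA : List.Chain N.adj r (A ++ [v])) (TB : List.Chain N.adj r (B ++ [w]))
    (NA : (r :: (A ++ [v])).Nodup) (NB : (r :: (B ++ [w])).Nodup)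
    (topdisj : ∀ z ∈ A ++ [v], z ∉ B ++ [w])
    (hvw : ¬ N.reaches v w) (hwv : ¬ N.reaches w v)
    (hvh : Relation.TransGen N.adj v h) (hwh : Relation.TransGen N.adj w h)
    (hmax : ∀ m, N.reaches v m → N.reaches w m → N.reaches m h → m = h) :
    ∃ C : NCycle N, C.r = r ∧ C.h = h ∧ v ∈ C.verts ∧ w ∈ C.verts ∧
      ∀ z ∈ C.verts, z = r ∨ z ∈ A ++ [v] ∨ z ∈ B ++ [w] ∨
        (N.reaches v z ∧ N.reaches z h) ∨ (N.reaches w z ∧ N.reaches z h) := by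
  obtain ⟨P, cP, nP⟩ := exists_nodup_path hvh
  obtain ⟨Q, cQ, nQ⟩ := exists_nodup_path hwh
  have fA := chain_reach A TA
  have fB := chain_reach B TB
  have fP := chain_reach P cP
  have fQ := chain_reach Q cQ
  have hrv : N.reaches r v := (fA v (by simp)).1
  have hrw : N.reaches r w := (fB w (by simp)).1
  have hne_rh : r ≠ h := by
    rintro rfl
    exact N.acyclic v (hvh.trans_left hrv)
  have hP : h ∉ v :: P := by
    intro hmem
    have hnd : ((v :: P) ++ [h]).Nodup := by simpa using nP
    exact (List.disjoint_of_nodup_append hnd) hmem (List.mem_singleton_self h)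
  have hQ : h ∉ w :: Q := by
    intro hmem
    have hnd : ((w :: Q) ++ [h]).Nodup := by simpa using nQ
    exact (List.disjoint_of_nodup_append hnd) hmem (List.mem_singleton_self h)
  have hvA : v ∉ r :: A := by
    intro hmem
    have hnd : ((r :: A) ++ [v]).Nodup := by simpa using NA
    exact (List.disjoint_of_nodup_append hnd) hmem (List.mem_singleton_self v)
  have hwB : w ∉ r :: B := by
    intro hmem
    have hnd : ((r :: B) ++ [w]).Nodup := by simpa using NB
    exact (List.disjoint_of_nodup_append hnd) hmem (List.mem_singleton_self w)
  have ndrA : (r :: A).Nodup := by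
    have hnd : ((r :: A) ++ [v]).Nodup := by simpa using NA
    exact (List.nodup_append.mp hnd).1
  have ndrB : (r :: B).Nodup := by
    have hnd : ((r :: B) ++ [w]).Nodup := by simpa using NB
    exact (List.nodup_append.mp hnd).1
  have dPQ : ∀ z ∈ v :: P, z ∉ w :: Q := by
    intro z hz hz'
    have h1 := fP z (mem_cons_append hz)
    have h2 := fQ z (mem_cons_append hz')
    have : z = h := hmax z h1.1 h2.1 h1.2
    exact hP (this ▸ hz)
  have dAv_Q : ∀ z ∈ r :: (A ++ [v]), z ∉ w :: Q := by
    intro z hz hz'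
    exact hwv ((fQ z (mem_cons_append hz')).1.trans (fA z hz).2)
  have dBw_P : ∀ z ∈ r :: (B ++ [w]), z ∉ v :: P := by
    intro z hz hz'
    exact hvw ((fP z (mem_cons_append hz')).1.trans (fB z hz).2)
  have nodup1 : (r :: ((A ++ v :: P) ++ [h])).Nodup := by
    have e : (r :: ((A ++ v :: P) ++ [h])) = (r :: A) ++ ((v :: P) ++ [h]) := by simp
    rw [e]
    refine List.Nodup.append ndrA (by simpa using nP) ?_
    intro z hz hz'
    have h1 : N.reaches z v := (fA z (mem_cons_append hz)).2
    rcases List.mem_append.mp hz' with hz' | hz'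
    · have h2 : N.reaches v z := (fP z (mem_cons_append hz')).1
      have hzv : z = v := reaches_antisymm h1 h2
      exact hvA (hzv ▸ hz)
    · rw [List.mem_singleton] at hz'
      subst hz'
      exact N.acyclic v (hvh.trans_left h1)
  have nodup2 : (r :: ((B ++ w :: Q) ++ [h])).Nodup := by
    have e : (r :: ((B ++ w :: Q) ++ [h])) = (r :: B) ++ ((w :: Q) ++ [h]) := by simp
    rw [e]
    refine List.Nodup.append ndrB (by simpa using nQ) ?_
    intro z hz hz'
    have h1 : N.reaches z w := (fB z (mem_cons_append hz)).2
    rcases List.mem_append.mp hz' with hz' | hz'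
    · have h2 : N.reaches w z := (fQ z (mem_cons_append hz')).1
      have hzw : z = w := reaches_antisymm h1 h2
      exact hwB (hzw ▸ hz)
    · rw [List.mem_singleton] at hz'
      subst hz'
      exact N.acyclic w (hwh.trans_left h1)
  have disj : ∀ z ∈ A ++ v :: P, z ∉ B ++ w :: Q := by
    intro z hz hz'
    rcases List.mem_append.mp hz with h1 | h1 <;> rcases List.mem_append.mp hz' with h2 | h2
    · exact topdisj z (List.mem_append_left _ h1) (List.mem_append_left _ h2)
    · exact dAv_Q z (List.mem_cons_of_mem _ (List.mem_append_left _ h1)) h2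
    · exact dBw_P z (List.mem_cons_of_mem _ (List.mem_append_left _ h2)) h1
    · exact dPQ z h1 h2
  have chain1 : List.Chain N.adj r ((A ++ v :: P) ++ [h]) := by
    have e : (A ++ v :: P) ++ [h] = A ++ v :: (P ++ [h]) := by simp
    rw [e]
    exact List.isChain_cons_split.mpr ⟨TA, cP⟩
  have chain2 : List.Chain N.adj r ((B ++ w :: Q) ++ [h]) := by
    have e : (B ++ w :: Q) ++ [h] = B ++ w :: (Q ++ [h]) := by simp
    rw [e]
    exact List.isChain_cons_split.mpr ⟨TB, cQ⟩
  refine ⟨⟨r, h, A ++ v :: P, B ++ w :: Q, chain1, chain2, hne_rh, nodup1, nodup2, disj,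
      Or.inl (by simp)⟩, rfl, rfl, ?_, ?_, ?_⟩
  · simp [NCycle.verts]
  · simp [NCycle.verts]
  · intro z hz
    simp only [NCycle.verts, Set.mem_union, Set.mem_insert_iff, Set.mem_singleton_iff,
      Set.mem_setOf_eq] at hz
    rcases hz with ((rfl | rfl) | hz) | hz
    · exact Or.inl rfl
    · exact Or.inr (Or.inr (Or.inr (Or.inl ⟨hvh.to_reflTransGen, Relation.ReflTransGen.refl⟩)))
    · rcases List.mem_append.mp hz with h1 | h1
      · exact Or.inr (Or.inl (List.mem_append_left _ h1))
      · exact Or.inr (Or.inr (Or.inr (Or.inl (fP z (mem_cons_append h1)))))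
    · rcases List.mem_append.mp hz with h1 | h1
      · exact Or.inr (Or.inr (Or.inl (List.mem_append_left _ h1)))
      · exact Or.inr (Or.inr (Or.inr (Or.inr (fQ z (mem_cons_append h1)))))

private lemma exists_common_top (hN : N.IsLevelOne) (v w u0 : N.V)
    (hvw : ¬ N.reaches v w) (hwv : ¬ N.reaches w v)
    (h1 : N.reaches v u0) (h2 : N.reaches w u0) :
    ∃ h, N.reaches v h ∧ N.reaches w h ∧
      ∀ u, N.reaches v u → N.reaches w u → N.reaches h u := by
  obtain ⟨h, ⟨hvh, hwh⟩, hmaxT⟩ := exists_top {m | N.reaches v m ∧ N.reaches w m} ⟨u0, h1, h2⟩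
  refine ⟨h, hvh, hwh, ?_⟩
  intro u huv huw
  by_contra hhu
  obtain ⟨u', ⟨⟨hu'v, hu'w⟩, hu'u⟩, hmaxU⟩ :=
    exists_top {d | (N.reaches v d ∧ N.reaches w d) ∧ N.reaches d u}
      ⟨u, ⟨huv, huw⟩, Relation.ReflTransGen.refl⟩
  have hhu' : ¬ N.reaches h u' := fun hr => hhu (hr.trans hu'u)
  have hu'h : ¬ N.reaches u' h := fun hr => hhu ((hmaxT u' ⟨hu'v, hu'w⟩ hr) ▸ hu'u)
  obtain ⟨r, ⟨hrv, hrw⟩, hrbot⟩ := exists_bot {m | N.reaches m v ∧ N.reaches m w}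
      ⟨N.root, N.connected v, N.connected w⟩
  have hrv' : r ≠ v := by rintro rfl; exact hvw hrw
  have hrw' : r ≠ w := by rintro rfl; exact hwv hrv
  obtain ⟨A, TA, NA⟩ := exists_nodup_path (transGen_of_ne hrv (fun e => hrv' e.symm))
  obtain ⟨B, TB, NB⟩ := exists_nodup_path (transGen_of_ne hrw (fun e => hrw' e.symm))
  have fA := chain_reach A TA
  have fB := chain_reach B TB
  have topdisj : ∀ z ∈ A ++ [v], z ∉ B ++ [w] := by
    intro z hz hz'
    have hA := fA z (List.mem_cons_of_mem _ hz)
    have hB := fB z (List.mem_cons_of_mem _ hz')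
    have hrz : r = z := hrbot z ⟨hA.2, hB.2⟩ hA.1
    exact (List.nodup_cons.mp NA).1 (hrz ▸ hz)
  have hvhne : v ≠ h := by rintro rfl; exact hwv hwh
  have hwhne : w ≠ h := by rintro rfl; exact hvw hvh
  have hvu' : v ≠ u' := by rintro rfl; exact hwv hu'w
  have hwu' : w ≠ u' := by rintro rfl; exact hvw hu'v
  obtain ⟨C₁, hC₁r, hC₁h, hvC₁, hwC₁, char₁⟩ := buildCycle r v w h A B TA TB NA NB topdisj
      hvw hwv (transGen_of_ne hvh (fun e => hvhne e.symm))
      (transGen_of_ne hwh (fun e => hwhne e.symm))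
      (fun m a b c => hmaxT m ⟨a, b⟩ c)
  obtain ⟨C₂, hC₂r, hC₂h, hvC₂, hwC₂, char₂⟩ := buildCycle r v w u' A B TA TB NA NB topdisj
      hvw hwv (transGen_of_ne hu'v (fun e => hvu' e.symm))
      (transGen_of_ne hu'w (fun e => hwu' e.symm))
      (fun m a b c => hmaxU m ⟨⟨a, b⟩, c.trans hu'u⟩ c)
  have hverts := hN C₁ C₂ v hvC₁ hvC₂
  have hu'C₂ : u' ∈ C₂.verts := by
    simp [NCycle.verts, hC₂h]
  rw [← hverts] at hu'C₂
  rcases char₁ u' hu'C₂ with h0 | h0 | h0 | h0 | h0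
  · subst h0
    exact hrv' (reaches_antisymm hrv hu'v)
  · have := (fA u' (List.mem_cons_of_mem _ h0)).2
    exact hwv ((reaches_antisymm hu'v this) ▸ hu'w)
  · have := (fB u' (List.mem_cons_of_mem _ h0)).2
    exact hvw ((reaches_antisymm hu'w this) ▸ hu'v)
  · exact hu'h h0.2
  · exact hu'h h0.2

private lemma lca_unique' (hN : N.IsLevelOne) (Y : Finset X) (hYne : Y.Nonempty)
    (v w : N.V)
    (hv1 : ∀ x ∈ Y, N.reaches v (N.leaf x))
    (hv2 : ∀ c, N.adj v c → ¬ ∀ x ∈ Y, N.reaches c (N.leaf x))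
    (hw1 : ∀ x ∈ Y, N.reaches w (N.leaf x))
    (hw2 : ∀ c, N.adj w c → ¬ ∀ x ∈ Y, N.reaches c (N.leaf x)) : v = w := by
  by_contra hne
  rcases Classical.em (N.reaches v w) with hvw | hvw
  · obtain ⟨c, hc, hcw⟩ := exists_child (transGen_of_ne hvw (fun e => hne e.symm))
    exact hv2 c hc (fun x hx => hcw.trans (hw1 x hx))
  rcases Classical.em (N.reaches w v) with hwv | hwv
  · obtain ⟨c, hc, hcv⟩ := exists_child (transGen_of_ne hwv hne)
    exact hw2 c hc (fun x hx => hcv.trans (hv1 x hx))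
  obtain ⟨x0, hx0⟩ := hYne
  obtain ⟨h, hvh, hwh, htop⟩ := exists_common_top hN v w (N.leaf x0) hvw hwv
      (hv1 x0 hx0) (hw1 x0 hx0)
  have hvhne : v ≠ h := by rintro rfl; exact hwv hwh
  obtain ⟨c, hc, hch⟩ := exists_child (transGen_of_ne hvh (fun e => hvhne e.symm))
  exact hv2 c hc (fun x hx => hch.trans (htop (N.leaf x) (hv1 x hx) (hw1 x hx)))

private lemma cover_step (hN : N.IsLevelOne) (v : N.V) (S : Finset X) (t : X)
    (c c' : N.V) (hc : N.adj v c) (hc' : N.adj v c')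
    (hcS : ∀ x ∈ S, N.reaches c (N.leaf x))
    (s₀ : X) (hs₀ : s₀ ∈ S)
    (hc's : N.reaches c' (N.leaf s₀)) (hc't : N.reaches c' (N.leaf t))
    (hpairs : ∀ s ∈ S, ∃ d, N.adj v d ∧ N.reaches d (N.leaf s) ∧ N.reaches d (N.leaf t)) :
    ∃ d, N.adj v d ∧ (∀ x ∈ S, N.reaches d (N.leaf x)) ∧ N.reaches d (N.leaf t) := by
  rcases Classical.em (N.reaches c c') with h1 | hcc'
  · exact ⟨c, hc, hcS, h1.trans hc't⟩
  rcases Classical.em (N.reaches c' c) with h1 | hc'c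
  · exact ⟨c', hc', fun x hx => h1.trans (hcS x hx), hc't⟩
  obtain ⟨h, hch, hc'h, htop⟩ := exists_common_top hN c c' (N.leaf s₀) hcc' hc'c
      (hcS s₀ hs₀) hc's
  have hvc_ne : v ≠ c := by rintro rfl; exact N.acyclic v (.single hc)
  have hvc'_ne : v ≠ c' := by rintro rfl; exact N.acyclic v (.single hc')
  have hcc'_ne : c ≠ c' := by rintro rfl; exact hcc' Relation.ReflTransGen.refl
  have TA : List.Chain N.adj v ([] ++ [c]) := by unfold List.Chain; simpa using hc
  have TB : List.Chain N.adj v ([] ++ [c']) := by unfold List.Chain; simpa using hc'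
  have NA : (v :: ([] ++ [c])).Nodup := by simp [hvc_ne]
  have NB : (v :: ([] ++ [c'])).Nodup := by simp [hvc'_ne]
  have topdisj : ∀ z ∈ [] ++ [c], z ∉ [] ++ [c'] := by
    intro z hz hz'
    simp only [List.nil_append, List.mem_singleton] at hz hz'
    exact hcc'_ne (hz ▸ hz')
  have hch_ne : c ≠ h := by rintro rfl; exact hc'c hc'h
  have hc'h_ne : c' ≠ h := by rintro rfl; exact hcc' hch
  obtain ⟨C, hCr, hCh, hcC, hc'C, char⟩ := buildCycle v c c' h [] [] TA TB NA NB topdisj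
      hcc' hc'c (transGen_of_ne hch (fun e => hch_ne e.symm))
      (transGen_of_ne hc'h (fun e => hc'h_ne e.symm))
      (fun m a b r' => reaches_antisymm r' (htop m a b))
  rcases Classical.em (∀ s ∈ S, N.reaches c' (N.leaf s)) with hall | hnall
  · exact ⟨c', hc', hall, hc't⟩
  push_neg at hnall
  obtain ⟨s, hsS, hns⟩ := hnall
  obtain ⟨d, hd, hds, hdt⟩ := hpairs s hsS
  rcases Classical.em (N.reaches c d) with h1 | hcd
  · exact ⟨c, hc, hcS, h1.trans hdt⟩
  rcases Classical.em (N.reaches d c) with h1 | hdc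
  · exact ⟨d, hd, fun x hx => h1.trans (hcS x hx), hdt⟩
  exfalso
  obtain ⟨h₂, hch₂, hdh₂, htop₂⟩ := exists_common_top hN c d (N.leaf s) hcd hdc
      (hcS s hsS) hds
  have hvd_ne : v ≠ d := by rintro rfl; exact N.acyclic v (.single hd)
  have hcd_ne : c ≠ d := by rintro rfl; exact hcd Relation.ReflTransGen.refl
  have hch₂_ne : c ≠ h₂ := by rintro rfl; exact hdc hdh₂
  have hdh₂_ne : d ≠ h₂ := by rintro rfl; exact hcd hch₂
  have TB₂ : List.Chain N.adj v ([] ++ [d]) := by unfold List.Chain; simpa using hd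
  have NB₂ : (v :: ([] ++ [d])).Nodup := by simp [hvd_ne]
  have topdisj₂ : ∀ z ∈ [] ++ [c], z ∉ [] ++ [d] := by
    intro z hz hz'
    simp only [List.nil_append, List.mem_singleton] at hz hz'
    exact hcd_ne (hz ▸ hz')
  obtain ⟨C₂, hC₂r, hC₂h, hcC₂, hdC₂, char₂⟩ := buildCycle v c d h₂ [] [] TA TB₂ NA NB₂
      topdisj₂ hcd hdc (transGen_of_ne hch₂ (fun e => hch₂_ne e.symm))
      (transGen_of_ne hdh₂ (fun e => hdh₂_ne e.symm))
      (fun m a b r' => reaches_antisymm r' (htop₂ m a b))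
  have hverts := hN C C₂ c hcC hcC₂
  rw [← hverts] at hdC₂
  rcases char d hdC₂ with h0 | h0 | h0 | h0 | h0
  · exact N.acyclic v (.single (h0 ▸ hd))
  · simp only [List.nil_append, List.mem_singleton] at h0
    exact hcd_ne h0.symm
  · simp only [List.nil_append, List.mem_singleton] at h0
    subst h0
    exact hns hds
  · exact hcd h0.1
  · exact hns (h0.1.trans hds)

private lemma cover (hN : N.IsLevelOne) (v : N.V) (Y : Finset X)
    (Hsingle : ∀ x ∈ Y, ∃ c, N.adj v c ∧ N.reaches c (N.leaf x))
    (Hpair : ∀ x ∈ Y, ∀ y ∈ Y, x ≠ y →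
      ∃ c, N.adj v c ∧ N.reaches c (N.leaf x) ∧ N.reaches c (N.leaf y)) :
    ∀ S : Finset X, S ⊆ Y → S.Nonempty →
      ∃ c, N.adj v c ∧ ∀ x ∈ S, N.reaches c (N.leaf x) := by
  intro S
  induction S using Finset.cons_induction with
  | empty => exact fun _ hne => absurd rfl hne.ne_empty
  | cons a S ha ih =>
    intro hsub _
    have hsubS : S ⊆ Y := fun z hz => hsub (Finset.mem_cons.mpr (Or.inr hz))
    have haY : a ∈ Y := hsub (Finset.mem_cons_self a S)
    rcases S.eq_empty_or_nonempty with rfl | hne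
    · obtain ⟨c, hc, hca⟩ := Hsingle a haY
      refine ⟨c, hc, ?_⟩
      intro x hx
      rcases Finset.mem_cons.mp hx with rfl | hx
      · exact hca
      · exact absurd hx (Finset.notMem_empty x)
    · obtain ⟨c, hc, hcS⟩ := ih hsubS hne
      obtain ⟨s₀, hs₀⟩ := hne
      have hs₀a : s₀ ≠ a := fun e => ha (e ▸ hs₀)
      obtain ⟨c', hc', hc's, hc'a⟩ := Hpair s₀ (hsubS hs₀) a haY hs₀a
      obtain ⟨d, hd, hdS, hda⟩ := cover_step hN v S a c c' hc hc' hcS s₀ hs₀ hc's hc'a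
          (fun s hs => Hpair s (hsubS hs) a haY (fun e => ha (e ▸ hs)))
      refine ⟨d, hd, ?_⟩
      intro x hx
      rcases Finset.mem_cons.mp hx with rfl | hx
      · exact hda
      · exact hdS x hx

end PhyloNetwork

end LcaAux

open PhyloNetwork in
/-- In a level-1 network `N` on `X`, every `Y ⊆ X` with `|Y| ≥ 2` has a unique
lowest common ancestor `v` (an interior vertex with `Y ⊆ F(v)` but `Y ⊄ F(v')`
for every child `v'` of `v`); moreover `v = lca(x,y)` for two distinct `x,y ∈ Y`. -/
theorem lca_exists_unique {X : Type} [Fintype X] [DecidableEq X]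
    (N : PhyloNetwork X) (hN : N.IsLevelOne) (Y : Finset X) (hY : 2 ≤ Y.card) :
    ∃ v : N.V, (¬ N.IsLeafV v ∧ N.IsLca Y v) ∧
      (∀ w : N.V, (¬ N.IsLeafV w ∧ N.IsLca Y w) → w = v) ∧
      ∃ x ∈ Y, ∃ y ∈ Y, x ≠ y ∧ N.IsLca {x, y} v := by
  classical
  obtain ⟨v, hv1, hvbot⟩ := PhyloNetwork.exists_bot (N := N)
      {m | ∀ x ∈ Y, N.reaches m (N.leaf x)} ⟨N.root, fun x _ => N.connected _⟩
  have hv2 : ∀ c, N.adj v c → ¬ ∀ x ∈ Y, N.reaches c (N.leaf x) := by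
    intro c hcadj hall
    have hvc : v = c := hvbot c hall (Relation.ReflTransGen.single hcadj)
    exact N.acyclic v (Relation.TransGen.single (hvc ▸ hcadj))
  obtain ⟨x0, hx0, y0, hy0, hxy0⟩ := Finset.one_lt_card.mp (lt_of_lt_of_le one_lt_two hY)
  have hnl : ¬ N.IsLeafV v := by
    rintro ⟨z, rfl⟩
    have key : ∀ x, N.reaches (N.leaf z) (N.leaf x) → x = z := by
      intro x hx
      rcases Relation.reflTransGen_iff_eq_or_transGen.mp hx with he | ht
      · exact N.leaf_inj he
      · obtain ⟨c, hcadj, _⟩ := PhyloNetwork.exists_child ht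
        exact absurd hcadj (N.leaf_no_out z c)
    exact hxy0 ((key x0 (hv1 x0 hx0)).trans (key y0 (hv1 y0 hy0)).symm)
  have hYne : Y.Nonempty := Finset.card_pos.mp (lt_of_lt_of_le two_pos hY)
  have hIs : N.IsLca Y v :=
    ⟨fun x hx => hv1 x hx, fun c hcadj hall => hv2 c hcadj (fun x hx => hall x hx)⟩
  refine ⟨v, ⟨hnl, hIs⟩, ?_, ?_⟩
  · rintro w ⟨-, hw1, hw2⟩
    exact PhyloNetwork.lca_unique' hN Y hYne w v (fun x hx => hw1 x hx)
      (fun c hcadj hall => hw2 c hcadj (fun x hx => hall x hx)) hv1 hv2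
  · by_contra hcon
    push_neg at hcon
    have Hpair : ∀ x ∈ Y, ∀ y ∈ Y, x ≠ y →
        ∃ c, N.adj v c ∧ N.reaches c (N.leaf x) ∧ N.reaches c (N.leaf y) := by
      intro x hx y hy hxy
      have hnlca := hcon x hx y hy hxy
      have hmem : ∀ z ∈ ({x, y} : Finset X), z ∈ N.F v := by
        intro z hz
        rcases Finset.mem_insert.mp hz with rfl | hz
        · exact hv1 _ hx
        · rw [Finset.mem_singleton] at hz
          subst hz
          exact hv1 _ hy
      have h2 : ¬ ∀ w, N.adj v w → ¬ (∀ z ∈ ({x, y} : Finset X), z ∈ N.F w) :=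
        fun hb => hnlca ⟨hmem, hb⟩
      push_neg at h2
      obtain ⟨c, hcadj, hall⟩ := h2
      exact ⟨c, hcadj, hall x (Finset.mem_insert_self x _),
        hall y (Finset.mem_insert_of_mem (Finset.mem_singleton_self y))⟩
    have Hsingle : ∀ x ∈ Y, ∃ c, N.adj v c ∧ N.reaches c (N.leaf x) := by
      intro x hx
      have hvx : N.leaf x ≠ v := fun e => hnl ⟨x, e⟩
      obtain ⟨c, hc1, hc2⟩ := PhyloNetwork.exists_child
        (PhyloNetwork.transGen_of_ne (hv1 x hx) hvx)
      exact ⟨c, hc1, hc2⟩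
    obtain ⟨c, hcadj, hall⟩ := PhyloNetwork.cover hN v Y Hsingle Hpair Y (le_refl _) hYne
    exact hv2 c hcadj hall
end

section
/- Let δ be a symbolic 2-dissimilarity on a finite set X (|X| ≥ 3) with values in M ∪ {⊙}. There exists a discriminating symbolic tree representation of δ if and only if δ is a symbolic ultrametric, i.e., (U1) for all distinct x,y,z ∈ X, |{δ(x,y), δ(x,z), δ(y,z)}| ≤ 2, and (U2) there are no four distinct elements x,y,z,u ∈ X with δ(x,y) = δ(y,z) = δ(z,u) ≠ δ(z,x) = δ(x,u) = δ(u,y). -/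
/-- A symbolic 2-dissimilarity on `X` with values in `M ∪ {⊙}` (`⊙` = `none`). -/
structure SymbolicDissim2 (X M : Type) [DecidableEq X] where
  val : Finset X → Option M
  singleton_none : ∀ A : Finset X, A.card = 1 → val A = none
  pair_some : ∀ A : Finset X, A.card = 2 → val A ≠ none

namespace PhyloNetwork

variable {X M : Type} [Fintype X] [DecidableEq X]

/-- `N` is a rooted (phylogenetic) tree: every non-root vertex has a unique parent. -/
def IsRootedTree (N : PhyloNetwork X) : Prop :=
  ∀ v : N.V, v ≠ N.root → ∃! u : N.V, N.adj u v

/-- `(N,t)` is a symbolic representation of the 2-dissimilarity `d`: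
`d(x,y) = t(lca(x,y))` for all distinct leaves `x,y`. -/
def Represents2 (N : PhyloNetwork X) (t : N.V → M) (d : SymbolicDissim2 X M) : Prop :=
  ∀ Y : Finset X, Y.card = 2 → ∀ v : N.V, N.IsLca Y v → d.val Y = some (t v)

/-- The labelling `t` is discriminating: adjacent interior vertices have
different labels. -/
def Discriminating (N : PhyloNetwork X) (t : N.V → M) : Prop :=
  ∀ u v : N.V, N.adj u v → ¬ N.IsLeafV v → t u ≠ t v

end PhyloNetwork

namespace BD
open Finset

variable {X M : Type} [Fintype X] [DecidableEq X] [DecidableEq M]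

lemma pair_swap (d : SymbolicDissim2 X M) (x y : X) : d.val {x, y} = d.val {y, x} := by
  rw [Finset.pair_comm]

lemma pair_some' (d : SymbolicDissim2 X M) {x y : X} (h : x ≠ y) :
    ∃ m : M, d.val {x, y} = some m := by
  have := d.pair_some {x, y} (Finset.card_pair h)
  exact Option.ne_none_iff_exists'.1 this

/-- A monochromatic cut of colour `m` in `A`. -/
def Cut (d : SymbolicDissim2 X M) (m : M) (A : Finset X) : Prop :=
  ∃ B : Finset X, B ⊆ A ∧ B.Nonempty ∧ B ≠ A ∧
    ∀ x ∈ B, ∀ y ∈ A, y ∉ B → d.val {x, y} = some m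

/-- The key combinatorial lemma: under (U1) and (U2) every set of size ≥ 2 has a
monochromatic cut. -/
lemma exists_cut (d : SymbolicDissim2 X M)
    (hU1 : ∀ x y z : X, x ≠ y → x ≠ z → y ≠ z →
      d.val {x, y} = d.val {x, z} ∨ d.val {x, y} = d.val {y, z} ∨
        d.val {x, z} = d.val {y, z})
    (hU2 : ¬ ∃ x y z u : X, x ≠ y ∧ x ≠ z ∧ x ≠ u ∧ y ≠ z ∧ y ≠ u ∧ z ≠ u ∧
      d.val {x, y} = d.val {y, z} ∧ d.val {y, z} = d.val {z, u} ∧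
      d.val {z, u} ≠ d.val {z, x} ∧
      d.val {z, x} = d.val {x, u} ∧ d.val {x, u} = d.val {u, y}) :
    ∀ A : Finset X, 2 ≤ A.card → ∃ m : M, Cut d m A := by
  intro A
  induction A using Finset.strongInduction with
  | _ A IH =>
  intro hcard
  by_cases h2 : A.card = 2
  · -- base case
    obtain ⟨x, y, hxy, rfl⟩ := Finset.card_eq_two.1 h2
    obtain ⟨m, hm⟩ := pair_some' d hxy
    refine ⟨m, {x}, ?_, ⟨x, mem_singleton_self x⟩, ?_, ?_⟩
    · intro a ha; rw [mem_singleton] at ha; subst ha; exact mem_insert_self _ _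
    · intro h; have : y ∈ ({x} : Finset X) := h ▸ (by simp)
      rw [mem_singleton] at this; exact hxy this.symm
    · intro a ha b hb hbn
      rw [mem_singleton] at ha; subst ha
      rw [mem_singleton] at hbn
      rcases mem_insert.1 hb with rfl | hb'
      · exact absurd rfl hbn
      · rw [mem_singleton] at hb'; subst hb'; exact hm
  · -- |A| ≥ 3
    have h3 : 3 ≤ A.card := by omega
    have hApos : A.Nonempty := Finset.card_pos.1 (by omega)
    obtain ⟨p, hp⟩ := hApos
    set A' := A.erase p with hA'
    have hpA' : p ∉ A' := Finset.notMem_erase p A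
    have hA'card : A'.card = A.card - 1 := Finset.card_erase_of_mem hp
    have hA'ss : A' ⊂ A := Finset.erase_ssubset hp
    have hA'sub : A' ⊆ A := hA'ss.subset
    obtain ⟨m, P, hPsub, hPne, hPneq, hcross⟩ := IH A' hA'ss (by omega)
    have hQne : ∃ q ∈ A', q ∉ P := by
      obtain ⟨q, hq1, hq2⟩ := Finset.exists_of_ssubset (hPsub.ssubset_of_ne hPneq)
      exact ⟨q, hq1, hq2⟩
    have hpP : p ∉ P := fun h => hpA' (hPsub h)
    by_cases hc1 : ∀ x ∈ P, d.val {p, x} = some m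
    · -- cut (P, A \ P)
      refine ⟨m, P, hPsub.trans hA'sub, hPne, ?_, ?_⟩
      · intro h; exact hpP (h ▸ hp)
      · intro x hx y hy hyn
        by_cases hyp : y = p
        · subst hyp; rw [pair_swap]; exact hc1 x hx
        · exact hcross x hx y (Finset.mem_erase.2 ⟨hyp, hy⟩) hyn
    · by_cases hc2 : ∀ y ∈ A', y ∉ P → d.val {p, y} = some m
      · -- cut (insert p P, A \ ...)
        obtain ⟨q, hq1, hq2⟩ := hQne
        refine ⟨m, insert p P, ?_, ⟨p, mem_insert_self _ _⟩, ?_, ?_⟩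
        · intro a ha; rcases mem_insert.1 ha with rfl | ha'
          · exact hp
          · exact hA'sub (hPsub ha')
        · intro h
          have : q ∈ insert p P := h ▸ hA'sub hq1
          rcases mem_insert.1 this with rfl | hq'
          · exact hpA' hq1
          · exact hq2 hq'
        · intro x hx y hy hyn
          have hynp : y ≠ p := fun h => hyn (h ▸ mem_insert_self _ _)
          have hyA' : y ∈ A' := Finset.mem_erase.2 ⟨hynp, hy⟩
          have hynP : y ∉ P := fun h => hyn (mem_insert_of_mem h)
          rcases mem_insert.1 hx with rfl | hx'
          · exact hc2 y hyA' hynP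
          · exact hcross x hx' y hyA' hynP
      · -- the hard case
        push_neg at hc1 hc2
        obtain ⟨x0, hx0P, hx0⟩ := hc1
        obtain ⟨y0, hy0A', hy0nP, hy0⟩ := hc2
        have hx0A' : x0 ∈ A' := hPsub hx0P
        have hpx0 : p ≠ x0 := fun h => hpA' (h ▸ hx0A')
        have hpy0 : p ≠ y0 := fun h => hpA' (h ▸ hy0A')
        have hx0y0 : x0 ≠ y0 := fun h => hy0nP (h ▸ hx0P)
        obtain ⟨a, ha⟩ := pair_some' d hpx0
        have ham : a ≠ m := fun h => hx0 (h ▸ ha)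
        -- d {p, y0} = some a
        have hy0a : d.val {p, y0} = some a := by
          rcases hU1 p x0 y0 hpx0 hpy0 hx0y0 with h | h | h
          · rw [ha] at h; exact h.symm
          · rw [ha] at h
            exact absurd (h.trans (hcross x0 hx0P y0 hy0A' hy0nP)) (by simpa using ham)
          · exact absurd (h.trans (hcross x0 hx0P y0 hy0A' hy0nP)) hy0
        -- every z in A' with non-m value to p has value a
        have hSa : ∀ z ∈ A', d.val {p, z} ≠ some m → d.val {p, z} = some a := by
          intro z hzA' hz
          have hpz : p ≠ z := fun h => hpA' (h ▸ hzA')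
          by_cases hzP : z ∈ P
          · by_cases hzx0 : z = x0
            · subst hzx0; exact ha
            · have hcy : d.val {z, y0} = some m := hcross z hzP y0 hy0A' hy0nP
              have hzy0 : z ≠ y0 := fun h => hy0nP (h ▸ hzP)
              rcases hU1 p z y0 hpz hpy0 hzy0 with h | h | h
              · rw [hy0a] at h; exact h
              · rw [hcy] at h; exact absurd h hz
              · rw [hy0a, hcy] at h; exact absurd h (by simpa using ham)
          · by_cases hzy0 : z = y0
            · subst hzy0; exact hy0a
            · have hcy : d.val {x0, z} = some m := hcross x0 hx0P z hzA' hzP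
              have hcy' : d.val {z, x0} = some m := by rw [pair_swap]; exact hcy
              have hzx0 : z ≠ x0 := fun h => hzP (h ▸ hx0P)
              rcases hU1 p z x0 hpz hpx0 hzx0 with h | h | h
              · rw [ha] at h; exact h
              · rw [hcy'] at h; exact absurd h hz
              · rw [ha, hcy'] at h; exact absurd h (by simpa using ham)
        set Sa := A'.filter (fun z => d.val {p, z} ≠ some m) with hSadef
        set Sm := A'.filter (fun z => d.val {p, z} = some m) with hSmdef
        have hmemSa : ∀ z, z ∈ Sa ↔ z ∈ A' ∧ d.val {p, z} ≠ some m := by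
          intro z; simp [hSadef]
        have hmemSm : ∀ z, z ∈ Sm ↔ z ∈ A' ∧ d.val {p, z} = some m := by
          intro z; simp [hSmdef]
        by_cases hSmne : Sm.Nonempty
        · -- cut (insert p Sa, Sm), colour m
          refine ⟨m, insert p Sa, ?_, ⟨p, mem_insert_self _ _⟩, ?_, ?_⟩
          · intro z hz; rcases mem_insert.1 hz with rfl | hz'
            · exact hp
            · exact hA'sub ((hmemSa z).1 hz').1
          · obtain ⟨w, hw⟩ := hSmne
            intro h
            have hwA : w ∈ A := hA'sub ((hmemSm w).1 hw).1
            have : w ∈ insert p Sa := h ▸ hwA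
            rcases mem_insert.1 this with rfl | hw'
            · exact hpA' ((hmemSm w).1 hw).1
            · exact ((hmemSa w).1 hw').2 ((hmemSm w).1 hw).2
          · intro x hx y hy hyn
            have hynp : y ≠ p := fun h => hyn (h ▸ mem_insert_self _ _)
            have hyA' : y ∈ A' := Finset.mem_erase.2 ⟨hynp, hy⟩
            have hym : d.val {p, y} = some m := by
              by_contra hcon
              exact hyn (mem_insert_of_mem ((hmemSa y).2 ⟨hyA', hcon⟩))
            rcases mem_insert.1 hx with rfl | hx'
            · exact hym
            · -- x ∈ Sa
              obtain ⟨hxA', hxm⟩ := (hmemSa x).1 hx'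
              have hxa : d.val {p, x} = some a := hSa x hxA' hxm
              have hpx : p ≠ x := fun h => hpA' (h ▸ hxA')
              have hpy : p ≠ y := fun h => hpA' (h ▸ hyA')
              have hxy : x ≠ y := fun h => hxm (h ▸ hym)
              by_contra hne
              -- first, its value must be a
              have hxya : d.val {x, y} = some a := by
                rcases hU1 p x y hpx hpy hxy with h | h | h
                · rw [hxa, hym] at h
                  exact absurd h (by simpa using ham)
                · rw [hxa] at h; exact h.symm
                · rw [hym] at h; exact absurd h.symm hne
              -- case on sides
              by_cases hxP : x ∈ P
              · by_cases hyP : y ∈ P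
                · -- both in P, use y0 (which is not in P)
                  have e1 : d.val {y, x} = some a := by rw [pair_swap d y x]; exact hxya
                  have e2 : d.val {x, p} = some a := by rw [pair_swap d x p]; exact hxa
                  have e5 : d.val {y, y0} = some m := hcross y hyP y0 hy0A' hy0nP
                  have e6 : d.val {y0, x} = some m := by
                    rw [pair_swap d y0 x]; exact hcross x hxP y0 hy0A' hy0nP
                  refine hU2 ⟨y, x, p, y0, hxy.symm, hpy.symm, ?_, hpx.symm,
                    fun h => hy0nP (h ▸ hxP), hpy0, ?_, ?_, ?_, ?_, ?_⟩
                  · exact fun h => hy0 (h ▸ hym)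
                  · rw [e1, e2]
                  · rw [e2, hy0a]
                  · rw [hy0a, hym]; simpa using ham
                  · rw [hym, e5]
                  · rw [e5, e6]
                · -- x ∈ P, y ∉ P : cross edge, contradiction with hne
                  exact hne (hcross x hxP y hyA' hyP)
              · by_cases hyP : y ∈ P
                · exact hne (by rw [pair_swap]; exact hcross y hyP x hxA' hxP)
                · -- both outside P, use x0 ∈ P
                  have e1 : d.val {y, x} = some a := by rw [pair_swap d y x]; exact hxya
                  have e2 : d.val {x, p} = some a := by rw [pair_swap d x p]; exact hxa
                  have e5 : d.val {y, x0} = some m := by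
                    rw [pair_swap d y x0]; exact hcross x0 hx0P y hyA' hyP
                  have e6 : d.val {x0, x} = some m := hcross x0 hx0P x hxA' hxP
                  refine hU2 ⟨y, x, p, x0, hxy.symm, hpy.symm,
                    fun h => hyP (h ▸ hx0P), hpx.symm,
                    fun h => hxP (h ▸ hx0P), hpx0, ?_, ?_, ?_, ?_, ?_⟩
                  · rw [e1, e2]
                  · rw [e2, ha]
                  · rw [ha, hym]; simpa using ham
                  · rw [hym, e5]
                  · rw [e5, e6]
        · -- Sm empty : cut ({p}, A'), colour a
          refine ⟨a, {p}, ?_, ⟨p, mem_singleton_self p⟩, ?_, ?_⟩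
          · intro z hz; rw [mem_singleton] at hz; subst hz; exact hp
          · intro h
            have : x0 ∈ ({p} : Finset X) := h ▸ hA'sub hx0A'
            rw [mem_singleton] at this; exact hpx0 this.symm
          · intro x hx y hy hyn
            rw [mem_singleton] at hx; subst hx
            rw [mem_singleton] at hyn
            have hyA' : y ∈ A' := Finset.mem_erase.2 ⟨hyn, hy⟩
            refine hSa y hyA' ?_
            intro hcon
            exact hSmne ⟨y, (hmemSm y).2 ⟨hyA', hcon⟩⟩


/-! ### Components and clusters -/

variable (d : SymbolicDissim2 X M) (μ : Finset X → M)

def Rel (A : Finset X) (x y : X) : Prop :=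
  x ∈ A ∧ y ∈ A ∧ d.val {x, y} ≠ some (μ A)

lemma rel_symm (A : Finset X) : Symmetric (Rel d μ A) := by
  rintro x y ⟨h1, h2, h3⟩
  exact ⟨h2, h1, by rw [pair_swap d y x]; exact h3⟩

noncomputable def comp (A : Finset X) (x : X) : Finset X := by
  classical exact A.filter (fun y => Relation.ReflTransGen (Rel d μ A) x y)

lemma mem_comp {A : Finset X} {x y : X} :
    y ∈ comp d μ A x ↔ y ∈ A ∧ Relation.ReflTransGen (Rel d μ A) x y := by
  simp [comp]

lemma comp_subset {A : Finset X} {x : X} : comp d μ A x ⊆ A :=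
  fun y hy => ((mem_comp d μ).1 hy).1

lemma mem_comp_self {A : Finset X} {x : X} (hx : x ∈ A) : x ∈ comp d μ A x :=
  (mem_comp d μ).2 ⟨hx, Relation.ReflTransGen.refl⟩

lemma comp_eq_of_mem {A : Finset X} {x y : X} (hy : y ∈ comp d μ A x) :
    comp d μ A x = comp d μ A y := by
  obtain ⟨hyA, hxy⟩ := (mem_comp d μ).1 hy
  have hyx : Relation.ReflTransGen (Rel d μ A) y x := by
    haveI : Std.Symm (Rel d μ A) := ⟨fun a b h => rel_symm d μ A h⟩
    exact Std.Symm.symm _ _ hxy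
  ext z
  simp only [mem_comp d μ]
  exact ⟨fun ⟨hz, h⟩ => ⟨hz, hyx.trans h⟩, fun ⟨hz, h⟩ => ⟨hz, hxy.trans h⟩⟩

lemma stay {A : Finset X} (S : Finset X)
    (hclosed : ∀ u v, u ∈ S → Rel d μ A u v → v ∈ S) {x y : X} (hx : x ∈ S)
    (h : Relation.ReflTransGen (Rel d μ A) x y) : y ∈ S := by
  induction h with
  | refl => exact hx
  | tail h1 h2 ih => exact hclosed _ _ ih h2

lemma comp_subset_side {A B0 : Finset X} {x : X} (hB0 : B0 ⊆ A)
    (hcross : ∀ x ∈ B0, ∀ y ∈ A, y ∉ B0 → d.val {x, y} = some (μ A))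
    (hx : x ∈ B0) : comp d μ A x ⊆ B0 := by
  intro y hy
  obtain ⟨hyA, hxy⟩ := (mem_comp d μ).1 hy
  refine stay d μ B0 ?_ hx hxy
  rintro u v hu ⟨huA, hvA, hval⟩
  by_contra hvB
  exact hval (hcross u hu v hvA hvB)

lemma comp_subset_coside {A B0 : Finset X} {x : X} (hB0 : B0 ⊆ A)
    (hcross : ∀ x ∈ B0, ∀ y ∈ A, y ∉ B0 → d.val {x, y} = some (μ A))
    (hxA : x ∈ A) (hx : x ∉ B0) : comp d μ A x ⊆ A \ B0 := by
  intro y hy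
  obtain ⟨hyA, hxy⟩ := (mem_comp d μ).1 hy
  refine stay d μ (A \ B0) ?_ (by simp [hxA, hx]) hxy
  rintro u v hu ⟨huA, hvA, hval⟩
  rw [Finset.mem_sdiff] at hu
  rw [Finset.mem_sdiff]
  refine ⟨hvA, fun hvB => ?_⟩
  have := hcross v hvB u huA hu.2
  rw [pair_swap d v u] at this
  exact hval this

lemma no_ssubset_self (s : Finset X) : ¬ s ⊂ s :=
  fun h => (Finset.ssubset_iff_subset_ne.1 h).2 rfl

lemma comp_ssubset {A : Finset X} {x : X} (hcut : Cut d (μ A) A) (hx : x ∈ A) :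
    comp d μ A x ⊂ A := by
  obtain ⟨B0, hBsub, ⟨b, hb⟩, hBneq, hcross⟩ := hcut
  rw [Finset.ssubset_iff_of_subset (comp_subset d μ)]
  by_cases hxB : x ∈ B0
  · obtain ⟨q, hq1, hq2⟩ := Finset.exists_of_ssubset (hBsub.ssubset_of_ne hBneq)
    exact ⟨q, hq1, fun hc => hq2 (comp_subset_side d μ hBsub hcross hxB hc)⟩
  · refine ⟨b, hBsub hb, fun hc => ?_⟩
    have := comp_subset_coside d μ hBsub hcross hx hxB hc
    rw [Finset.mem_sdiff] at this
    exact this.2 hb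

inductive IsCluster (d : SymbolicDissim2 X M) (μ : Finset X → M) : Finset X → Prop
  | univ : IsCluster d μ Finset.univ
  | comp : ∀ A x, IsCluster d μ A → 2 ≤ A.card → x ∈ A → IsCluster d μ (comp d μ A x)

lemma cluster_nonempty [Nonempty X] {A : Finset X} (hA : IsCluster d μ A) :
    A.Nonempty := by
  induction hA with
  | univ => exact Finset.univ_nonempty
  | comp A x hA hcard hx ih => exact ⟨x, mem_comp_self d μ hx⟩

lemma two_le_card_of_ne_singleton {A : Finset X} {x : X} (hx : x ∈ A)
    (hne : A ≠ {x}) : 2 ≤ A.card := by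
  rw [show (2:ℕ) ≤ A.card ↔ 1 < A.card from Iff.rfl]
  by_contra h
  push_neg at h
  apply hne
  apply Finset.eq_singleton_iff_unique_mem.2
  refine ⟨hx, fun y hy => ?_⟩
  by_contra hyx
  exact absurd (Finset.one_lt_card.2 ⟨y, hy, x, hx, hyx⟩) (by omega)

lemma singleton_cluster_aux (hμ : ∀ A : Finset X, 2 ≤ A.card → Cut d (μ A) A) :
    ∀ n (A : Finset X), A.card ≤ n → IsCluster d μ A → ∀ x ∈ A, IsCluster d μ {x} := by
  intro n
  induction n with
  | zero =>
    intro A hcard hA x hx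
    rw [Nat.le_zero, Finset.card_eq_zero] at hcard
    subst hcard; exact absurd hx (Finset.notMem_empty x)
  | succ n ih =>
    intro A hcard hA x hx
    by_cases hAx : A = {x}
    · exact hAx ▸ hA
    · have hc : 2 ≤ A.card := two_le_card_of_ne_singleton hx hAx
      have hss : comp d μ A x ⊂ A := comp_ssubset d μ (hμ A hc) hx
      have hcard' : (comp d μ A x).card ≤ n := by
        have := Finset.card_lt_card hss
        omega
      exact ih (comp d μ A x) hcard' (IsCluster.comp A x hA hc hx) x (mem_comp_self d μ hx)

/-! ### The chain of clusters through a fixed leaf -/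

noncomputable def chain (x : X) : ℕ → Finset X
  | 0 => Finset.univ
  | k + 1 =>
      if 2 ≤ (chain x k).card then comp d μ (chain x k) x else chain x k

lemma chain_succ (x : X) (k : ℕ) :
    chain d μ x (k + 1) =
      if 2 ≤ (chain d μ x k).card then comp d μ (chain d μ x k) x
      else chain d μ x k := rfl

lemma chain_anti (x : X) (k : ℕ) : chain d μ x (k + 1) ⊆ chain d μ x k := by
  rw [chain_succ]
  split
  · exact comp_subset d μ
  · exact Finset.Subset.refl _

lemma chain_le (x : X) {j k : ℕ} (h : j ≤ k) : chain d μ x k ⊆ chain d μ x j := by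
  induction k with
  | zero => rw [Nat.le_zero] at h; subst h; exact Finset.Subset.refl _
  | succ k ih =>
    rcases Nat.lt_or_ge j (k+1) with h' | h'
    · exact (chain_anti d μ x k).trans (ih (by omega))
    · have : j = k + 1 := by omega
      subst this; exact Finset.Subset.refl _

lemma cluster_chain {A : Finset X} (hA : IsCluster d μ A) :
    ∀ x ∈ A, ∃ k, A = chain d μ x k := by
  induction hA with
  | univ => exact fun x _ => ⟨0, rfl⟩
  | comp A y hA hcard hy ih =>
    intro x hx
    have hxA : x ∈ A := comp_subset d μ hx
    obtain ⟨k, hk⟩ := ih x hxA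
    refine ⟨k + 1, ?_⟩
    rw [comp_eq_of_mem d μ hx, chain_succ, ← hk, if_pos hcard]


lemma ssubset_absurd {s t : Finset X} (h1 : s ⊂ t) (h2 : t ⊆ s) : False :=
  (Finset.ssubset_iff_subset_ne.1 h1).2
    (Finset.Subset.antisymm (Finset.ssubset_iff_subset_ne.1 h1).1 h2)

/-! ### The Böcker–Dress tree -/

def Adj (P Q : {A : Finset X // IsCluster d μ A}) : Prop :=
  2 ≤ P.1.card ∧ ∃ x ∈ P.1, Q.1 = comp d μ P.1 x

variable {d μ} in
lemma adj_ssubset (hμ : ∀ A : Finset X, 2 ≤ A.card → Cut d (μ A) A)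
    {P Q : {A : Finset X // IsCluster d μ A}} (h : Adj d μ P Q) : Q.1 ⊂ P.1 := by
  obtain ⟨hc, x, hx, hQ⟩ := h
  rw [hQ]
  exact comp_ssubset d μ (hμ _ hc) hx

variable {d μ} in
lemma tg_ssubset (hμ : ∀ A : Finset X, 2 ≤ A.card → Cut d (μ A) A)
    {P Q : {A : Finset X // IsCluster d μ A}}
    (h : Relation.TransGen (Adj d μ) P Q) : Q.1 ⊂ P.1 := by
  induction h with
  | single h' => exact adj_ssubset hμ h'
  | tail h1 h2 ih => exact (adj_ssubset hμ h2).trans ih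

variable {d μ} in
lemma parent_unique (hμ : ∀ A : Finset X, 2 ≤ A.card → Cut d (μ A) A)
    {P1 P2 Q : {A : Finset X // IsCluster d μ A}}
    (h1 : Adj d μ P1 Q) (h2 : Adj d μ P2 Q) : P1 = P2 := by
  obtain ⟨hc1, x1, hx1, hQ1⟩ := h1
  obtain ⟨hc2, x2, hx2, hQ2⟩ := h2
  have hx1Q : x1 ∈ Q.1 := hQ1 ▸ mem_comp_self d μ hx1
  have hQ2' : Q.1 = comp d μ P2.1 x1 := by
    rw [hQ2]
    exact comp_eq_of_mem d μ (hQ2 ▸ hx1Q)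
  have hxP1 : x1 ∈ P1.1 := comp_subset d μ (hQ1 ▸ hx1Q)
  have hxP2 : x1 ∈ P2.1 := comp_subset d μ (hQ2' ▸ hx1Q)
  obtain ⟨k1, hk1⟩ := cluster_chain d μ P1.2 x1 hxP1
  obtain ⟨k2, hk2⟩ := cluster_chain d μ P2.2 x1 hxP2
  have e1 : Q.1 = chain d μ x1 (k1 + 1) := by
    rw [chain_succ, ← hk1, if_pos hc1, hQ1]
  have e2 : Q.1 = chain d μ x1 (k2 + 1) := by
    rw [chain_succ, ← hk2, if_pos hc2, hQ2']
  have hssub1 : Q.1 ⊂ P1.1 := adj_ssubset hμ ⟨hc1, x1, hx1, hQ1⟩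
  have hssub2 : Q.1 ⊂ P2.1 := adj_ssubset hμ ⟨hc2, x2, hx2, hQ2⟩
  rcases lt_trichotomy k1 k2 with h | h | h
  · exfalso
    have : P2.1 ⊆ Q.1 := by rw [hk2, e1]; exact chain_le d μ x1 (by omega)
    exact ssubset_absurd hssub2 this
  · exact Subtype.ext (hk1.trans (h ▸ hk2).symm)
  · exfalso
    have : P1.1 ⊆ Q.1 := by rw [hk1, e2]; exact chain_le d μ x1 (by omega)
    exact ssubset_absurd hssub1 this

noncomputable def net (hμ : ∀ A : Finset X, 2 ≤ A.card → Cut d (μ A) A)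
    [Nonempty X] : PhyloNetwork X where
  V := {A : Finset X // IsCluster d μ A}
  instFin := by classical exact Subtype.fintype _
  instDec := fun a b => Classical.dec _
  adj := Adj d μ
  root := ⟨Finset.univ, IsCluster.univ⟩
  leaf := fun x =>
    ⟨{x}, singleton_cluster_aux d μ hμ (Finset.univ.card) Finset.univ le_rfl
      IsCluster.univ x (Finset.mem_univ x)⟩
  acyclic := fun v h => no_ssubset_self v.1 (tg_ssubset hμ h)
  root_no_in := by
    intro u h
    exact ssubset_absurd (adj_ssubset hμ h) (Finset.subset_univ u.1)
  connected := by
    rintro ⟨A, hA⟩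
    induction hA with
    | univ => exact Relation.ReflTransGen.refl
    | comp A x hA hcard hx ih => exact ih.tail ⟨hcard, x, hx, rfl⟩
  leaf_inj := by
    intro x y h
    exact Finset.singleton_injective (congrArg Subtype.val h)
  leaf_no_out := by
    rintro x w ⟨hc, -⟩
    simp at hc
  leaves_only := by
    rintro ⟨A, hA⟩ hnoout
    obtain ⟨x, hx⟩ := cluster_nonempty d μ hA
    by_cases hc : 2 ≤ A.card
    · exact absurd ⟨hc, x, hx, rfl⟩
        (hnoout ⟨comp d μ A x, IsCluster.comp A x hA hc hx⟩)
    · right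
      have h1 : A.card = 1 := by
        have := Finset.card_pos.2 ⟨x, hx⟩
        omega
      obtain ⟨y, hy⟩ := Finset.card_eq_one.1 h1
      exact ⟨y, Subtype.ext hy.symm⟩
  no_inout_one := by
    rintro ⟨A, hA⟩ ⟨hin, hout⟩
    by_cases hc : 2 ≤ A.card
    · obtain ⟨B0, hBsub, ⟨b, hb⟩, hBneq, hcross⟩ := hμ A hc
      obtain ⟨q, hqA, hqB⟩ := Finset.exists_of_ssubset (hBsub.ssubset_of_ne hBneq)
      obtain ⟨w, hw, huniq⟩ := hout
      have hbA : b ∈ A := hBsub hb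
      have e1 := huniq ⟨comp d μ A b, IsCluster.comp A b hA hc hbA⟩ ⟨hc, b, hbA, rfl⟩
      have e2 := huniq ⟨comp d μ A q, IsCluster.comp A q hA hc hqA⟩ ⟨hc, q, hqA, rfl⟩
      have : comp d μ A b = comp d μ A q := congrArg Subtype.val (e1.trans e2.symm)
      have hbmem : b ∈ comp d μ A q := this ▸ mem_comp_self d μ hbA
      have := comp_subset_coside d μ hBsub hcross hqA hqB hbmem
      rw [Finset.mem_sdiff] at this
      exact this.2 hb
    · obtain ⟨w, hw, -⟩ := hout
      exact hc hw.1

section NetLemmas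

variable {d μ} [Nonempty X] (hμ : ∀ A : Finset X, 2 ≤ A.card → Cut d (μ A) A)

lemma net_adj_iff {P Q : (net d μ hμ).V} : (net d μ hμ).adj P Q ↔ Adj d μ P Q :=
  Iff.rfl

lemma net_reaches_subset {P Q : (net d μ hμ).V} (h : (net d μ hμ).reaches P Q) :
    Q.1 ⊆ P.1 := by
  induction h with
  | refl => exact Finset.Subset.refl _
  | tail h1 h2 ih => exact ((adj_ssubset hμ h2).subset).trans ih

lemma net_leaf_reaches : ∀ (n : ℕ) (A : Finset X) (hA : IsCluster d μ A) (x : X),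
    A.card ≤ n → x ∈ A → (net d μ hμ).reaches ⟨A, hA⟩ ((net d μ hμ).leaf x) := by
  intro n
  induction n with
  | zero =>
    intro A hA x hcard hx
    rw [Nat.le_zero, Finset.card_eq_zero] at hcard
    subst hcard; exact absurd hx (Finset.notMem_empty x)
  | succ n ih =>
    intro A hA x hcard hx
    by_cases hAx : A = {x}
    · have : (net d μ hμ).leaf x = ⟨A, hA⟩ := Subtype.ext hAx.symm
      rw [this]
      exact Relation.ReflTransGen.refl
    · have hc : 2 ≤ A.card := two_le_card_of_ne_singleton hx hAx
      have hss : comp d μ A x ⊂ A := comp_ssubset d μ (hμ A hc) hx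
      refine Relation.ReflTransGen.head
        (b := (⟨comp d μ A x, IsCluster.comp A x hA hc hx⟩ : (net d μ hμ).V))
        ⟨hc, x, hx, rfl⟩ ?_
      refine ih (comp d μ A x) (IsCluster.comp A x hA hc hx) x ?_ (mem_comp_self d μ hx)
      have := Finset.card_lt_card hss
      omega

lemma net_F {A : Finset X} {hA : IsCluster d μ A} {x : X} :
    x ∈ (net d μ hμ).F ⟨A, hA⟩ ↔ x ∈ A := by
  constructor
  · intro h
    have := net_reaches_subset hμ h
    exact Finset.singleton_subset_iff.1 this
  · intro h
    exact net_leaf_reaches hμ A.card A hA x le_rfl h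

lemma net_rooted : (net d μ hμ).IsRootedTree := by
  rintro ⟨A, hA⟩ hv
  have hex : ∃ P, (net d μ hμ).adj P ⟨A, hA⟩ := by
    induction hA with
    | univ => exact absurd (Subtype.ext rfl) hv
    | comp A x hA hcard hx ih =>
      exact ⟨⟨A, hA⟩, hcard, x, hx, rfl⟩
  obtain ⟨P, hP⟩ := hex
  exact ⟨P, hP, fun P' hP' => parent_unique hμ hP' hP⟩

lemma net_rep : (net d μ hμ).Represents2 (fun v => μ v.1) d := by
  intro Y hY v hlca
  obtain ⟨x, y, hxy, rfl⟩ := Finset.card_eq_two.1 hY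
  obtain ⟨A, hA⟩ := v
  have hx : x ∈ A := (net_F hμ).1 (hlca.1 x (by simp))
  have hy : y ∈ A := (net_F hμ).1 (hlca.1 y (by simp))
  have hc : 2 ≤ A.card := Finset.one_lt_card.2 ⟨x, hx, y, hy, hxy⟩
  show d.val {x, y} = some (μ A)
  by_contra hne
  have hyc : y ∈ comp d μ A x :=
    (mem_comp d μ).2 ⟨hy, Relation.ReflTransGen.single ⟨hx, hy, hne⟩⟩
  refine hlca.2 ⟨comp d μ A x, IsCluster.comp A x hA hc hx⟩ ⟨hc, x, hx, rfl⟩ ?_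
  intro z hz
  rcases Finset.mem_insert.1 hz with rfl | hz'
  · exact (net_F hμ).2 (mem_comp_self d μ hx)
  · rw [Finset.mem_singleton] at hz'
    subst hz'
    exact (net_F hμ).2 hyc

lemma net_disc : (net d μ hμ).Discriminating (fun v => μ v.1) := by
  rintro ⟨A, hA⟩ ⟨B, hB⟩ huv hnl
  obtain ⟨hc, x, hx, hvB⟩ := huv
  simp only at hvB
  have hxB : x ∈ B := hvB ▸ mem_comp_self d μ hx
  have hcB : 2 ≤ B.card := by
    rcases Nat.lt_or_ge B.card 2 with h' | h'
    · exfalso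
      have h1 : B.card = 1 := by
        have := Finset.card_pos.2 ⟨x, hxB⟩
        omega
      obtain ⟨y, hy⟩ := Finset.card_eq_one.1 h1
      exact hnl ⟨y, Subtype.ext hy.symm⟩
    · exact h'
  intro heq0
  have heq : μ A = μ B := heq0
  obtain ⟨S, hSsub, ⟨s, hs⟩, hSneq, hScross⟩ := hμ B hcB
  obtain ⟨w, hwB, hwS⟩ := Finset.exists_of_ssubset (hSsub.ssubset_of_ne hSneq)
  have hsB : s ∈ S := hs
  have hs1 : Relation.ReflTransGen (Rel d μ A) x s :=
    ((mem_comp d μ).1 (hvB ▸ hSsub hs)).2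
  have hw1 : Relation.ReflTransGen (Rel d μ A) x w :=
    ((mem_comp d μ).1 (hvB ▸ hwB)).2
  have hsw : Relation.ReflTransGen (Rel d μ A) s w :=
    (show Relation.ReflTransGen (Rel d μ A) s x by
        haveI : Std.Symm (Rel d μ A) := ⟨fun a b h => rel_symm d μ A h⟩
        exact Std.Symm.symm _ _ hs1).trans hw1
  have : w ∈ S := by
    refine stay d μ S ?_ hs hsw
    rintro u' v' hu' hrel
    have hu'B : u' ∈ B := hSsub hu'
    have hv'B : v' ∈ B := by
      have h1 : v' ∈ comp d μ A u' :=
        (mem_comp d μ).2 ⟨hrel.2.1, Relation.ReflTransGen.single hrel⟩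
      have h2 : comp d μ A x = comp d μ A u' :=
        comp_eq_of_mem d μ (hvB ▸ hu'B)
      rw [hvB, h2]
      exact h1
    by_contra hv'S
    have hval := hScross u' hu' v' hv'B hv'S
    rw [← heq] at hval
    exact hrel.2.2 hval
  exact hwS this

end NetLemmas

/-! ### Forward direction: a rooted tree representation is a symbolic ultrametric -/

section Forward

variable (N : PhyloNetwork X)

lemma comparable (hRT : N.IsRootedTree) {u v w : N.V}
    (hv : N.reaches v u) (hw : N.reaches w u) : N.reaches v w ∨ N.reaches w v := by
  have key : ∀ u v, N.reaches v u → ∀ w, N.reaches w u →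
      N.reaches v w ∨ N.reaches w v := by
    intro u v hv
    induction hv with
    | refl => intro w hw; exact Or.inr hw
    | @tail b c h1 h2 ih =>
      intro w hw
      rcases Relation.ReflTransGen.cases_tail hw with h | ⟨q, hq1, hq2⟩
      · exact Or.inl (h ▸ h1.tail h2)
      · have hcroot : c ≠ N.root := fun hc => N.root_no_in q (hc ▸ hq2)
        obtain ⟨pc, hpc, hupc⟩ := hRT c hcroot
        have hqb : q = b := (hupc q hq2).trans (hupc b h2).symm
        exact ih w (hqb ▸ hq1)
  exact key u v hv w hw

lemma lca_exists (Y : Finset X) : ∃ v, N.IsLca Y v := by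
  letI := N.instFin
  haveI : IsTrans N.V (fun a b => Relation.TransGen N.adj b a) :=
    ⟨fun a b c h1 h2 => h2.trans h1⟩
  haveI : IsIrrefl N.V (fun a b => Relation.TransGen N.adj b a) :=
    ⟨fun a h => N.acyclic a h⟩
  have wf := Finite.wellFounded_of_trans_of_irrefl
    (fun a b : N.V => Relation.TransGen N.adj b a)
  obtain ⟨v, hvS, hmin⟩ := wf.has_min {v | ∀ x ∈ Y, x ∈ N.F v}
    ⟨N.root, fun x _ => N.connected _⟩
  exact ⟨v, hvS, fun w hw hcon => hmin w hcon (Relation.TransGen.single hw)⟩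

lemma lca_unique (hRT : N.IsRootedTree) {Y : Finset X} {y : X} (hy : y ∈ Y)
    {v w : N.V} (h1 : N.IsLca Y v) (h2 : N.IsLca Y w) : v = w := by
  have key : ∀ v w : N.V, N.IsLca Y v → N.IsLca Y w → N.reaches v w → v = w := by
    intro v w h1 h2 hvw
    rcases Relation.ReflTransGen.cases_head hvw with h | ⟨c, hc1, hc2⟩
    · exact h
    · exact absurd (fun x hx => Relation.ReflTransGen.trans hc2 (h2.1 x hx))
        (h1.2 c hc1)
  rcases comparable N hRT (h1.1 y hy) (h2.1 y hy) with h | h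
  · exact key v w h1 h2 h
  · exact (key w v h2 h1 h).symm

lemma lca_step (hRT : N.IsRootedTree) {x y z : X} {a b : N.V}
    (ha : N.IsLca {x, y} a) (hb : N.IsLca {x, z} b)
    (hab : Relation.TransGen N.adj a b) : N.IsLca {y, z} a := by
  have hax : N.reaches a (N.leaf x) := ha.1 x (by simp)
  have hay : N.reaches a (N.leaf y) := ha.1 y (by simp)
  have hbx : N.reaches b (N.leaf x) := hb.1 x (by simp)
  have hbz : N.reaches b (N.leaf z) := hb.1 z (by simp)
  constructor
  · intro q hq
    rcases Finset.mem_insert.1 hq with rfl | hq'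
    · exact hay
    · rw [Finset.mem_singleton] at hq'
      subst hq'
      exact Relation.ReflTransGen.trans hab.to_reflTransGen hbz
  · intro w hw hcon
    have hwz : N.reaches w (N.leaf z) := hcon z (by simp)
    have hwy : N.reaches w (N.leaf y) := hcon y (by simp)
    have hwx : N.reaches w (N.leaf x) := by
      rcases comparable N hRT hwz hbz with h | h
      · exact Relation.ReflTransGen.trans h hbx
      · rcases Relation.reflTransGen_iff_eq_or_transGen.1 h with heq | htg
        · exact heq ▸ hbx
        · exfalso
          obtain ⟨q, hq1, hq2⟩ := Relation.TransGen.tail'_iff.1 htg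
          have hwroot : w ≠ N.root := fun hr => N.root_no_in a (hr ▸ hw)
          obtain ⟨p, hp, hup⟩ := hRT w hwroot
          have hqa : q = a := (hup q hq2).trans (hup a hw).symm
          exact N.acyclic b (Relation.TransGen.trans_right (hqa ▸ hq1) hab)
    refine ha.2 w hw ?_
    intro q hq
    rcases Finset.mem_insert.1 hq with rfl | hq'
    · exact hwx
    · rw [Finset.mem_singleton] at hq'
      subst hq'
      exact hwy

lemma lca_triple (hRT : N.IsRootedTree) {x y z : X}
    (hxy : x ≠ y) (hxz : x ≠ z) (hyz : y ≠ z) {a b c : N.V}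
    (ha : N.IsLca {x, y} a) (hb : N.IsLca {x, z} b) (hc : N.IsLca {y, z} c) :
    a = b ∨ (a = c ∧ Relation.TransGen N.adj a b) ∨
      (b = c ∧ Relation.TransGen N.adj b a) := by
  have hax : N.reaches a (N.leaf x) := ha.1 x (by simp)
  have hbx : N.reaches b (N.leaf x) := hb.1 x (by simp)
  rcases comparable N hRT hax hbx with h | h
  · rcases Relation.reflTransGen_iff_eq_or_transGen.1 h with heq | htg
    · exact Or.inl heq.symm
    · refine Or.inr (Or.inl ⟨?_, htg⟩)
      exact lca_unique N hRT (show y ∈ ({y, z} : Finset X) by simp)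
        (lca_step N hRT ha hb htg) hc
  · rcases Relation.reflTransGen_iff_eq_or_transGen.1 h with heq | htg
    · exact Or.inl heq
    · refine Or.inr (Or.inr ⟨?_, htg⟩)
      have := lca_step N hRT hb ha htg
      rw [Finset.pair_comm z y] at this
      exact lca_unique N hRT (show y ∈ ({y, z} : Finset X) by simp) this hc

end Forward

lemma card3_le {α : Type*} [DecidableEq α] {p q r : α}
    (h : p = q ∨ p = r ∨ q = r) : ({p, q, r} : Finset α).card ≤ 2 := by
  have bnd : ∀ s t : α, ({s, t} : Finset α).card ≤ 2 :=
    fun s t => (Finset.card_insert_le _ _).trans (by simp)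
  rcases h with h | h | h
  · refine le_trans (Finset.card_le_card ?_) (bnd q r)
    intro t ht
    simp only [Finset.mem_insert, Finset.mem_singleton] at ht ⊢
    rcases ht with rfl | rfl | rfl
    · exact Or.inl h
    · exact Or.inl rfl
    · exact Or.inr rfl
  · refine le_trans (Finset.card_le_card ?_) (bnd p q)
    intro t ht
    simp only [Finset.mem_insert, Finset.mem_singleton] at ht ⊢
    rcases ht with rfl | rfl | rfl
    · exact Or.inl rfl
    · exact Or.inr rfl
    · exact Or.inl h.symm
  · refine le_trans (Finset.card_le_card ?_) (bnd p q)
    intro t ht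
    simp only [Finset.mem_insert, Finset.mem_singleton] at ht ⊢
    rcases ht with rfl | rfl | rfl
    · exact Or.inl rfl
    · exact Or.inr rfl
    · exact Or.inr h.symm

end BD

/-- Böcker–Dress: a symbolic 2-dissimilarity on `X` (`|X| ≥ 3`) has a
discriminating symbolic tree representation iff it is a symbolic ultrametric,
i.e. satisfies (U1) and (U2). -/
theorem discriminating_tree_representation_iff_symbolic_ultrametric
    {X M : Type} [Fintype X] [DecidableEq X] [Fintype M] [DecidableEq M]
    (hX : 3 ≤ Fintype.card X) (d : SymbolicDissim2 X M) :
    (∃ (N : PhyloNetwork X) (t : N.V → M),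
        N.IsRootedTree ∧ N.Represents2 t d ∧ N.Discriminating t) ↔
      ((∀ x y z : X, x ≠ y → x ≠ z → y ≠ z →
          ({d.val {x, y}, d.val {x, z}, d.val {y, z}} : Finset (Option M)).card ≤ 2) ∧
        ¬ ∃ x y z u : X, x ≠ y ∧ x ≠ z ∧ x ≠ u ∧ y ≠ z ∧ y ≠ u ∧ z ≠ u ∧
          d.val {x, y} = d.val {y, z} ∧ d.val {y, z} = d.val {z, u} ∧
          d.val {z, u} ≠ d.val {z, x} ∧
          d.val {z, x} = d.val {x, u} ∧ d.val {x, u} = d.val {u, y}) := by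
  constructor
  · rintro ⟨N, t, hRT, hRep, -⟩
    constructor
    · intro x y z hxy hxz hyz
      obtain ⟨a, ha⟩ := BD.lca_exists N {x, y}
      obtain ⟨b, hb⟩ := BD.lca_exists N {x, z}
      obtain ⟨c, hc⟩ := BD.lca_exists N {y, z}
      have vxy : d.val {x, y} = some (t a) := hRep _ (Finset.card_pair hxy) a ha
      have vxz : d.val {x, z} = some (t b) := hRep _ (Finset.card_pair hxz) b hb
      have vyz : d.val {y, z} = some (t c) := hRep _ (Finset.card_pair hyz) c hc
      apply BD.card3_le
      rcases BD.lca_triple N hRT hxy hxz hyz ha hb hc with h | ⟨h, -⟩ | ⟨h, -⟩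
      · exact Or.inl (by rw [vxy, vxz, h])
      · exact Or.inr (Or.inl (by rw [vxy, vyz, h]))
      · exact Or.inr (Or.inr (by rw [vxz, vyz, h]))
    · rintro ⟨x, y, z, u, hxy, hxz, hxu, hyz, hyu, hzu, e1, e2, hne, e3, e4⟩
      obtain ⟨a, ha⟩ := BD.lca_exists N {x, y}
      obtain ⟨e, he⟩ := BD.lca_exists N {x, z}
      obtain ⟨b, hb⟩ := BD.lca_exists N {y, z}
      obtain ⟨f, hf⟩ := BD.lca_exists N {x, u}
      obtain ⟨g, hg⟩ := BD.lca_exists N {u, y}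
      obtain ⟨s, hs⟩ := BD.lca_exists N {z, u}
      have vxy : d.val {x, y} = some (t a) := hRep _ (Finset.card_pair hxy) a ha
      have vxz : d.val {x, z} = some (t e) := hRep _ (Finset.card_pair hxz) e he
      have vyz : d.val {y, z} = some (t b) := hRep _ (Finset.card_pair hyz) b hb
      have vxu : d.val {x, u} = some (t f) := hRep _ (Finset.card_pair hxu) f hf
      have vuy : d.val {u, y} = some (t g) :=
        hRep _ (Finset.card_pair hyu.symm) g hg
      have vzu : d.val {z, u} = some (t s) := hRep _ (Finset.card_pair hzu) s hs
      have exz : d.val {z, x} = d.val {x, z} := by rw [Finset.pair_comm]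
      have hP : d.val {x, y} = d.val {z, u} := e1.trans e2
      have key1 : d.val {x, y} ≠ d.val {x, z} := fun hcon =>
        hne (by rw [← hP, hcon]; exact exz.symm)
      -- triple (x, y, z)
      have htg1 : Relation.TransGen N.adj a e := by
        rcases BD.lca_triple N hRT hxy hxz hyz ha he hb with h | ⟨-, h⟩ | ⟨h, -⟩
        · exact absurd (by rw [vxy, vxz, h]) key1
        · exact h
        · exfalso
          have hcon : d.val {x, z} = d.val {y, z} := by rw [vxz, vyz, h]
          exact key1 (by rw [e1, ← hcon])
      -- triple (x, u, y)
      have htg2 : Relation.TransGen N.adj f a := by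
        rcases BD.lca_triple N hRT hxu hxy hyu.symm hf ha hg with h | ⟨-, h⟩ | ⟨h, -⟩
        · exfalso
          have hcon : d.val {x, u} = d.val {x, y} := by rw [vxu, vxy, h]
          exact hne (by rw [← hP, ← hcon, ← e3])
        · exact h
        · exfalso
          have hcon : d.val {x, y} = d.val {u, y} := by rw [vxy, vuy, h]
          exact hne (by rw [← hP, hcon, ← e4, ← e3])
      -- triple (x, z, u)
      have hef : e = f := by
        rcases BD.lca_triple N hRT hxz hxu hzu he hf hs with h | ⟨h, -⟩ | ⟨h, -⟩
        · exact h
        · exfalso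
          have hcon : d.val {x, z} = d.val {z, u} := by rw [vxz, vzu, h]
          exact hne (by rw [← hcon]; exact exz.symm)
        · exfalso
          have hcon : d.val {x, u} = d.val {z, u} := by rw [vxu, vzu, h]
          exact hne (by rw [← hcon, ← e3])
      rw [hef] at htg1
      exact N.acyclic f (htg2.trans htg1)
  · rintro ⟨hU1, hU2⟩
    have hU1' : ∀ x y z : X, x ≠ y → x ≠ z → y ≠ z →
        d.val {x, y} = d.val {x, z} ∨ d.val {x, y} = d.val {y, z} ∨
          d.val {x, z} = d.val {y, z} := by
      intro x y z h1 h2 h3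
      by_contra hcon
      push_neg at hcon
      obtain ⟨n1, n2, n3⟩ := hcon
      have hcard : ({d.val {x, y}, d.val {x, z}, d.val {y, z}} :
          Finset (Option M)).card = 3 := by
        rw [Finset.card_insert_of_notMem (by simp [n1, n2]),
          Finset.card_insert_of_notMem (by simp [n3]), Finset.card_singleton]
      have := hU1 x y z h1 h2 h3
      omega
    haveI hXne : Nonempty X := Fintype.card_pos_iff.1 (by omega)
    obtain ⟨x1, y1, hne1⟩ := Fintype.exists_pair_of_one_lt_card (α := X) (by omega)
    obtain ⟨m0, -⟩ := BD.pair_some' d hne1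
    have FULL : ∀ A : Finset X, ∃ m : M, 2 ≤ A.card → BD.Cut d m A := by
      intro A
      by_cases h : 2 ≤ A.card
      · obtain ⟨m, hm⟩ := BD.exists_cut d hU1' hU2 A h
        exact ⟨m, fun _ => hm⟩
      · exact ⟨m0, fun hc => absurd hc h⟩
    choose μ hμ using FULL
    exact ⟨BD.net d μ hμ, fun v => μ v.1, BD.net_rooted hμ, BD.net_rep hμ,
      BD.net_disc hμ⟩
end

section
/- Let δ be a symbolic 3-dissimilarity on X that is representable by a labelled level-1 network. Then δ satisfies the Helly-type property: for all distinct x,y,z ∈ X, δ(x,y,z) ∈ {δ(x,y), δ(x,z), δ(y,z)}. -/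
section AuxChain

variable {α : Type*} {r : α → α → Prop}

lemma chainAux_nodup (hirr : ∀ a, ¬ Relation.TransGen r a a)
    {a : α} {l : List α} (hc : List.Chain r a l) : (a :: l).Nodup := by
  have h2 : List.Chain (Relation.TransGen r) a l :=
    List.IsChain.imp (fun _ _ h => Relation.TransGen.single h) hc
  have h3 : List.Pairwise (Relation.TransGen r) (a :: l) := by
    rw [← List.isChain_iff_pairwise]
    exact h2
  have himp : ∀ {u v : α}, Relation.TransGen r u v → u ≠ v :=
    fun {u v} h he => hirr u (by rw [he] at h ⊢; exact h)
  exact h3.imp himp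

lemma chainAux_reaches {a b u : α} {l : List α}
    (hc : List.Chain r a l) (hb : (a :: l).getLast (List.cons_ne_nil _ _) = b)
    (hu : u ∈ a :: l) : Relation.ReflTransGen r u b := by
  rcases List.mem_cons.mp hu with rfl | hu
  · exact List.relationReflTransGen_of_exists_isChain_cons l hc hb
  · obtain ⟨p, q, rfl⟩ := List.append_of_mem hu
    have hq : List.Chain r u q := (List.isChain_append.mp (show List.IsChain r ((a :: p) ++ u :: q) from hc)).2.1
    apply List.relationReflTransGen_of_exists_isChain_cons q hq
    exact (List.getLast_append_of_right_ne_nil (a :: p) (u :: q) (List.cons_ne_nil _ _)).symm.trans hb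

lemma splitAux_first_mem {α : Type*} [DecidableEq α] {t2 : List α} :
    ∀ t1 : List α, (∃ x ∈ t1, x ∈ t2) →
      ∃ s1 h rest, t1 = s1 ++ h :: rest ∧ h ∈ t2 ∧ ∀ u ∈ s1, u ∉ t2 := by
  intro t1
  induction t1 with
  | nil => rintro ⟨x, hx, -⟩; cases hx
  | cons a t ih =>
    intro hex
    by_cases ha : a ∈ t2
    · exact ⟨[], a, t, rfl, ha, by simp⟩
    · obtain ⟨x, hx, hx2⟩ := hex
      rcases List.mem_cons.mp hx with rfl | hx
      · exact absurd hx2 ha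
      obtain ⟨s1, h, rest, heq, hh, hs⟩ := ih ⟨x, hx, hx2⟩
      refine ⟨a :: s1, h, rest, by rw [heq]; rfl, hh, ?_⟩
      intro u hu
      rcases List.mem_cons.mp hu with rfl | hu
      exacts [ha, hs u hu]

end AuxChain

namespace PhyloNetwork

variable {X : Type} [Fintype X] [DecidableEq X]

lemma cycle_of_two_paths (N : PhyloNetwork X) {v w1 w2 b : N.V} (h12 : w1 ≠ w2)
    (a1 : N.adj v w1) (a2 : N.adj v w2)
    (r1 : Relation.ReflTransGen N.adj w1 b) (r2 : Relation.ReflTransGen N.adj w2 b) :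
    ∃ C : NCycle N, v ∈ C.verts ∧ w1 ∈ C.verts ∧ w2 ∈ C.verts ∧
      ∀ u ∈ C.verts, Relation.ReflTransGen N.adj u b := by
  haveI := N.instDec
  obtain ⟨l1, hc1, hl1⟩ := List.exists_isChain_cons_of_relationReflTransGen r1
  obtain ⟨l2, hc2, hl2⟩ := List.exists_isChain_cons_of_relationReflTransGen r2
  have hct1 : List.Chain N.adj v (w1 :: l1) := List.IsChain.cons_cons a1 hc1
  have hct2 : List.Chain N.adj v (w2 :: l2) := List.IsChain.cons_cons a2 hc2
  have nd1 : (v :: w1 :: l1).Nodup := chainAux_nodup N.acyclic hct1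
  have nd2 : (v :: w2 :: l2).Nodup := chainAux_nodup N.acyclic hct2
  have hbt1 : b ∈ w1 :: l1 := hl1 ▸ List.getLast_mem _
  have hbt2 : b ∈ w2 :: l2 := hl2 ▸ List.getLast_mem _
  have hlast1 : (v :: w1 :: l1).getLast (List.cons_ne_nil _ _) = b := by
    rw [List.getLast_cons (List.cons_ne_nil w1 l1)]; exact hl1
  have hlast2 : (v :: w2 :: l2).getLast (List.cons_ne_nil _ _) = b := by
    rw [List.getLast_cons (List.cons_ne_nil w2 l2)]; exact hl2
  have reach1 : ∀ u ∈ v :: w1 :: l1, Relation.ReflTransGen N.adj u b :=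
    fun u hu => chainAux_reaches hct1 hlast1 hu
  have reach2 : ∀ u ∈ v :: w2 :: l2, Relation.ReflTransGen N.adj u b :=
    fun u hu => chainAux_reaches hct2 hlast2 hu
  obtain ⟨s1, h, rest, heq, hht2, hs1⟩ :=
    splitAux_first_mem (t2 := w2 :: l2) (w1 :: l1) ⟨b, hbt1, hbt2⟩
  obtain ⟨s2, rest2, heq2⟩ := List.append_of_mem hht2
  have hht1 : h ∈ w1 :: l1 := by rw [heq]; exact List.mem_append_right _ (List.mem_cons_self)
  have hvne : v ≠ h := by
    rintro rfl
    exact (List.nodup_cons.mp nd1).1 hht1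
  have hchain1 : List.Chain N.adj v (s1 ++ [h]) := by
    rw [heq] at hct1
    exact List.IsChain.left_of_append (l₂ := rest) (by rw [List.cons_append, List.append_assoc]; exact hct1)
  have hchain2 : List.Chain N.adj v (s2 ++ [h]) := by
    rw [heq2] at hct2
    exact List.IsChain.left_of_append (l₂ := rest2) (by rw [List.cons_append, List.append_assoc]; exact hct2)
  have hnodup1 : (v :: (s1 ++ [h])).Nodup := by
    rw [heq] at nd1
    refine List.Nodup.sublist ?_ nd1
    have : v :: (s1 ++ h :: rest) = (v :: (s1 ++ [h])) ++ rest := by simp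
    rw [this]
    exact List.sublist_append_left _ _
  have hnodup2 : (v :: (s2 ++ [h])).Nodup := by
    rw [heq2] at nd2
    refine List.Nodup.sublist ?_ nd2
    have : v :: (s2 ++ h :: rest2) = (v :: (s2 ++ [h])) ++ rest2 := by simp
    rw [this]
    exact List.sublist_append_left _ _
  have hdisj : ∀ u ∈ s1, u ∉ s2 := by
    intro u hu hu2
    exact hs1 u hu (by rw [heq2]; exact List.mem_append_left _ hu2)
  have hw1 : w1 = h ∨ w1 ∈ s1 := by
    cases s1 with
    | nil => left; exact (List.cons.injEq .. ▸ congrArg id heq : _ ∧ _).1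
    | cons a s => right; rw [List.cons_append] at heq; rw [(List.cons.inj heq).1]; exact List.mem_cons_self
  have hw2 : w2 = h ∨ w2 ∈ s2 := by
    cases s2 with
    | nil => left; exact (List.cons.inj heq2).1
    | cons a s => right; rw [List.cons_append] at heq2; rw [(List.cons.inj heq2).1]; exact List.mem_cons_self
  have hnontriv : s1 ≠ [] ∨ s2 ≠ [] := by
    by_contra hcon
    push_neg at hcon
    obtain ⟨e1, e2⟩ := hcon
    rw [e1] at heq; rw [e2] at heq2
    exact h12 (((List.cons.inj heq).1).trans ((List.cons.inj heq2).1).symm)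
  refine ⟨⟨v, h, s1, s2, hchain1, hchain2, hvne, hnodup1, hnodup2, hdisj, hnontriv⟩,
    ?_, ?_, ?_, ?_⟩
  · left; left; left; rfl
  · rcases hw1 with rfl | hw1
    · left; left; right; rfl
    · left; right; exact hw1
  · rcases hw2 with rfl | hw2
    · left; left; right; rfl
    · right; exact hw2
  · intro u hu
    rcases hu with ((hu | hu) | hu) | hu
    · exact reach1 u (hu ▸ List.mem_cons_self)
    · refine reach1 u ?_
      rw [hu]
      exact List.mem_cons_of_mem _ hht1
    · exact reach1 u (List.mem_cons_of_mem _ (by rw [heq]; exact List.mem_append_left _ hu))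
    · exact reach2 u (List.mem_cons_of_mem _ (by rw [heq2]; exact List.mem_append_left _ hu))

lemma exists_isLca (N : PhyloNetwork X) (Y : Finset X) : ∃ v, N.IsLca Y v := by
  haveI := N.instFin
  have hwf : WellFounded (fun a b : N.V => Relation.TransGen N.adj b a) := by
    haveI : IsTrans N.V (fun a b => Relation.TransGen N.adj b a) :=
      ⟨fun a b c h1 h2 => h2.trans h1⟩
    haveI : IsIrrefl N.V (fun a b => Relation.TransGen N.adj b a) := ⟨fun a => N.acyclic a⟩
    exact Finite.wellFounded_of_trans_of_irrefl _
  have main : ∀ v : N.V, (∀ x ∈ Y, x ∈ N.F v) → ∃ u, N.IsLca Y u := by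
    intro v
    induction v using hwf.induction with
    | _ v ih =>
      intro hv
      by_cases hch : ∃ w, N.adj v w ∧ ∀ x ∈ Y, x ∈ N.F w
      · obtain ⟨w, hw, hwY⟩ := hch
        exact ih w (Relation.TransGen.single hw) hwY
      · exact ⟨v, hv, fun w hw hall => hch ⟨w, hw, hall⟩⟩
  exact main N.root fun x _ => N.connected (N.leaf x)

end PhyloNetwork

/-- A level-1 representable symbolic 3-dissimilarity satisfies the Helly-type
property: `δ(x,y,z) ∈ {δ(x,y), δ(x,z), δ(y,z)}` for all distinct `x,y,z`. -/
theorem levelOneRepresentable_helly {X M : Type}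
    [Fintype X] [DecidableEq X] [Fintype M] [DecidableEq M]
    (d : SymbolicDissim3 X M) (hrep : d.LevelOneRepresentable) :
    ∀ x y z : X, x ≠ y → x ≠ z → y ≠ z →
      d.val {x, y, z} = d.val {x, y} ∨ d.val {x, y, z} = d.val {x, z} ∨
        d.val {x, y, z} = d.val {y, z} := by
  intro x y z hxy hxz hyz
  obtain ⟨N, t, hlev, hr⟩ := hrep
  obtain ⟨v, hv⟩ := N.exists_isLca {x, y, z}
  have card3 : ({x, y, z} : Finset X).card = 3 := by
    rw [Finset.card_insert_of_notMem (by simp [hxy, hxz]),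
      Finset.card_insert_of_notMem (by simp [hyz]), Finset.card_singleton]
  have hx : x ∈ N.F v := hv.1 x (by simp)
  have hy : y ∈ N.F v := hv.1 y (by simp)
  have hz : z ∈ N.F v := hv.1 z (by simp)
  have hnall : ∀ w, N.adj v w → ¬ (x ∈ N.F w ∧ y ∈ N.F w ∧ z ∈ N.F w) := by
    rintro w hw ⟨ha, hb, hc⟩
    refine hv.2 w hw ?_
    intro u hu
    simp only [Finset.mem_insert, Finset.mem_singleton] at hu
    rcases hu with rfl | rfl | rfl
    exacts [ha, hb, hc]
  have key : N.IsLca {x, y} v ∨ N.IsLca {x, z} v ∨ N.IsLca {y, z} v := by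
    by_contra hcon
    push_neg at hcon
    obtain ⟨h1, h2, h3⟩ := hcon
    have get : ∀ a b : X, a ∈ N.F v → b ∈ N.F v → ¬ N.IsLca {a, b} v →
        ∃ w, N.adj v w ∧ a ∈ N.F w ∧ b ∈ N.F w := by
      intro a b ha hb hn
      by_contra hno
      push_neg at hno
      refine hn ⟨?_, fun w hw hall => hno w hw (hall a (by simp)) (hall b (by simp))⟩
      intro u hu
      simp only [Finset.mem_insert, Finset.mem_singleton] at hu
      rcases hu with rfl | rfl
      exacts [ha, hb]
    obtain ⟨w1, a1, hx1, hy1⟩ := get x y hx hy h1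
    obtain ⟨w2, a2, hx2, hz2⟩ := get x z hx hz h2
    obtain ⟨w3, a3, hy3, hz3⟩ := get y z hy hz h3
    have h12 : w1 ≠ w2 := by rintro rfl; exact hnall w1 a1 ⟨hx1, hy1, hz2⟩
    have h23 : w2 ≠ w3 := by rintro rfl; exact hnall w2 a2 ⟨hx2, hy3, hz2⟩
    obtain ⟨C1, hv1, hw11, hw21, hr1⟩ := N.cycle_of_two_paths h12 a1 a2 hx1 hx2
    obtain ⟨C2, hv2, hw22, hw32, hr2⟩ := N.cycle_of_two_paths h23 a2 a3 hz2 hz3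
    have hvv : C1.verts = C2.verts := hlev C1 C2 v hv1 hv2
    have hw3x : Relation.ReflTransGen N.adj w3 (N.leaf x) := hr1 w3 (hvv ▸ hw32)
    exact hnall w3 a3 ⟨hw3x, hy3, hz3⟩
  have h3v := hr {x, y, z} (Or.inr card3) v hv
  rcases key with hk | hk | hk
  · left; rw [h3v, hr {x, y} (Or.inl (Finset.card_pair hxy)) v hk]
  · right; left; rw [h3v, hr {x, z} (Or.inl (Finset.card_pair hxz)) v hk]
  · right; right; rw [h3v, hr {y, z} (Or.inl (Finset.card_pair hyz)) v hk]
end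

section
/- Let N be a level-1 phylogenetic network on X with cycles C_1, ..., C_k (k ≥ 1). Then the collection {R(C_1), ..., R(C_k)} of root offspring sets of the cycles forms a hierarchy on X, i.e., for any two sets A, B in the collection, A ∩ B ∈ {A, B, ∅}. -/
section Helpers

variable {α : Type*} {R : α → α → Prop}

private lemma chain_transGen :
    ∀ {l : List α} {x y : α}, List.Chain R x l → y ∈ l → Relation.TransGen R x y := by
  intro l
  induction l with
  | nil => intro x y _ hy; simp at hy
  | cons a t ih =>
    intro x y h hy
    rcases List.chain_cons.1 h with ⟨hxa, hc⟩
    rcases List.mem_cons.1 hy with rfl | hy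
    · exact Relation.TransGen.single hxa
    · exact Relation.TransGen.head hxa (ih hc hy)

private lemma chain_reflTransGen {l : List α} {x y : α} (h : List.Chain R x l)
    (hy : y ∈ x :: l) : Relation.ReflTransGen R x y := by
  rcases List.mem_cons.1 hy with rfl | hy
  · exact Relation.ReflTransGen.refl
  · exact (chain_transGen h hy).to_reflTransGen

private lemma chain_nodup (hac : ∀ v, ¬ Relation.TransGen R v v) :
    ∀ {l : List α} {x : α}, List.Chain R x l → (x :: l).Nodup := by
  intro l
  induction l with
  | nil => simp
  | cons a t ih =>
    intro x h
    rcases List.chain_cons.1 h with ⟨_, hc⟩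
    refine List.nodup_cons.2 ⟨fun hx => hac x (chain_transGen h hx), ih hc⟩

private lemma chain_append' :
    ∀ {l₁ : List α} {x : α} {l₂ : List α}, List.Chain R x l₁ →
      List.Chain R ((x :: l₁).getLast (List.cons_ne_nil _ _)) l₂ →
      List.Chain R x (l₁ ++ l₂) := by
  intro l₁
  induction l₁ with
  | nil => intro x l₂ _ h2; simpa using h2
  | cons a t ih =>
    intro x l₂ h1 h2
    rcases List.chain_cons.1 h1 with ⟨hxa, hc⟩
    rw [List.getLast_cons_cons] at h2
    exact List.chain_cons.2 ⟨hxa, ih hc h2⟩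

private lemma chain_reach_getLast :
    ∀ {l : List α} {x y : α} (h : List.Chain R x l), y ∈ x :: l →
      Relation.ReflTransGen R y ((x :: l).getLast (List.cons_ne_nil _ _)) := by
  intro l
  induction l with
  | nil =>
    intro x y _ hy
    simp only [List.mem_singleton] at hy
    subst hy; exact Relation.ReflTransGen.refl
  | cons a t ih =>
    intro x y h hy
    rcases List.chain_cons.1 h with ⟨hxa, hc⟩
    rw [List.getLast_cons_cons]
    rcases List.mem_cons.1 hy with rfl | hy
    · exact Relation.ReflTransGen.head hxa (ih hc List.mem_cons_self)
    · exact ih hc hy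

private lemma exists_last_split (p : α → Prop) :
    ∀ (l : List α), (∃ x ∈ l, p x) →
      ∃ l₁ x l₂, l = l₁ ++ x :: l₂ ∧ p x ∧ ∀ y ∈ l₂, ¬ p y := by
  intro l
  induction l with
  | nil => rintro ⟨x, hx, -⟩; simp at hx
  | cons a t ih =>
    rintro ⟨x, hx, hpx⟩
    by_cases ht : ∃ y ∈ t, p y
    · obtain ⟨l₁, z, l₂, rfl, hz, hl₂⟩ := ih ht
      exact ⟨a :: l₁, z, l₂, rfl, hz, hl₂⟩
    · have hxa : x = a := by
        rcases List.mem_cons.1 hx with rfl | h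
        · rfl
        · exact absurd ⟨x, h, hpx⟩ ht
      subst hxa
      exact ⟨[], x, t, rfl, hpx, fun y hy hpy => ht ⟨y, hy, hpy⟩⟩

private lemma exists_first_split (p : α → Prop) :
    ∀ (l : List α), (∃ x ∈ l, p x) →
      ∃ l₁ x l₂, l = l₁ ++ x :: l₂ ∧ p x ∧ ∀ y ∈ l₁, ¬ p y := by
  intro l
  induction l with
  | nil => rintro ⟨x, hx, -⟩; simp at hx
  | cons a t ih =>
    rintro ⟨x, hx, hpx⟩
    by_cases ha : p a
    · exact ⟨[], a, t, rfl, ha, by simp⟩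
    · have hxt : x ∈ t := by
        rcases List.mem_cons.1 hx with rfl | h
        · exact absurd hpx ha
        · exact h
      obtain ⟨l₁, z, l₂, rfl, hz, hl₁⟩ := ih ⟨x, hxt, hpx⟩
      exact ⟨a :: l₁, z, l₂, rfl, hz, by
        intro y hy
        rcases List.mem_cons.1 hy with rfl | hy
        · exact ha
        · exact hl₁ y hy⟩

end Helpers

open PhyloNetwork in
private lemma PhyloNetwork.NCycle.r_out {X : Type} [Fintype X] [DecidableEq X] {N : PhyloNetwork X}
    (C : NCycle N) : ∃ w, N.adj C.r w := by
  have h := C.chain1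
  cases hs : C.side1 with
  | nil =>
    rw [hs] at h
    exact ⟨C.h, (List.chain_cons.1 h).1⟩
  | cons a t =>
    rw [hs] at h
    exact ⟨a, (List.chain_cons.1 h).1⟩

open PhyloNetwork in
private lemma PhyloNetwork.NCycle.root_reaches {X : Type} [Fintype X] [DecidableEq X] {N : PhyloNetwork X}
    (C : NCycle N) {v : N.V} (hv : v ∈ C.verts) : N.reaches C.r v := by
  simp only [NCycle.verts, Set.mem_union, Set.mem_insert_iff, Set.mem_singleton_iff,
    Set.mem_setOf_eq] at hv
  rcases hv with ((rfl | rfl) | hv) | hv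
  · exact Relation.ReflTransGen.refl
  · exact chain_reflTransGen C.chain1 (by simp)
  · exact chain_reflTransGen C.chain1 (by simp [hv])
  · exact chain_reflTransGen C.chain2 (by simp [hv])

open PhyloNetwork in
private lemma key_lemma {X : Type} [Fintype X] [DecidableEq X]
    (N : PhyloNetwork X) (hN : N.IsLevelOne) (C C' : NCycle N) (x : X)
    (h1 : ¬ N.reaches C.r C'.r) (h2 : ¬ N.reaches C'.r C.r)
    (hx1 : N.reaches C.r (N.leaf x)) (hx2 : N.reaches C'.r (N.leaf x)) : False := by
  classical
  -- the roots are not leaves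
  have hlx_ne_r : N.leaf x ≠ C.r := by
    obtain ⟨w, hw⟩ := NCycle.r_out C
    intro h; exact N.leaf_no_out x w (h ▸ hw)
  have hlx_ne_r' : N.leaf x ≠ C'.r := by
    obtain ⟨w, hw⟩ := NCycle.r_out C'
    intro h; exact N.leaf_no_out x w (h ▸ hw)
  -- build walk L1 : root → C.r → leaf x
  obtain ⟨la, hla, hlast_a⟩ := List.exists_isChain_cons_of_relationReflTransGen (N.connected C.r)
  obtain ⟨lb, hlb, hlast_b⟩ := List.exists_isChain_cons_of_relationReflTransGen hx1
  have hchain1 : List.Chain N.adj N.root (la ++ lb) :=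
    chain_append' hla (by rw [hlast_a]; exact hlb)
  set L1 : List N.V := N.root :: (la ++ lb) with hL1
  -- build walk L2 : root → C'.r → leaf x
  obtain ⟨la', hla', hlast_a'⟩ := List.exists_isChain_cons_of_relationReflTransGen (N.connected C'.r)
  obtain ⟨lb', hlb', hlast_b'⟩ := List.exists_isChain_cons_of_relationReflTransGen hx2
  have hchain2 : List.Chain N.adj N.root (la' ++ lb') :=
    chain_append' hla' (by rw [hlast_a']; exact hlb')
  set L2 : List N.V := N.root :: (la' ++ lb') with hL2
  have hnd1 : L1.Nodup := chain_nodup N.acyclic hchain1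
  have hnd2 : L2.Nodup := chain_nodup N.acyclic hchain2
  -- C.r ∉ L2
  have hrL2 : C.r ∉ L2 := by
    intro h
    rcases List.mem_cons.1 h with h | h
    · exact h1 (h ▸ N.connected C'.r)
    rcases List.mem_append.1 h with h | h
    · exact h1 (hlast_a' ▸ chain_reach_getLast hla' (List.mem_cons_of_mem _ h))
    · exact h2 (chain_reflTransGen hlb' (List.mem_cons_of_mem _ h))
  -- getLast of L1 and L2 are leaf x
  have hlb_ne : lb ≠ [] := by
    intro h; subst h
    have := hlast_b; simp at this
    exact hlx_ne_r this.symm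
  have hlb'_ne : lb' ≠ [] := by
    intro h; subst h
    have := hlast_b'; simp at this
    exact hlx_ne_r' this.symm
  have hglb : lb.getLast hlb_ne = N.leaf x := by
    rw [← hlast_b]; exact (List.getLast_cons hlb_ne).symm
  have hglb' : lb'.getLast hlb'_ne = N.leaf x := by
    rw [← hlast_b']; exact (List.getLast_cons hlb'_ne).symm
  have hglb? : lb.getLast? = some (N.leaf x) := by
    rw [List.getLast?_eq_getLast hlb_ne, hglb]
  have hglb'? : lb'.getLast? = some (N.leaf x) := by
    rw [List.getLast?_eq_getLast hlb'_ne, hglb']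
  have hgl1? : L1.getLast? = some (N.leaf x) := by
    show ((N.root :: la) ++ lb).getLast? = some (N.leaf x)
    rw [List.getLast?_append, hglb?]
    rfl
  have hgl2? : L2.getLast? = some (N.leaf x) := by
    show ((N.root :: la') ++ lb').getLast? = some (N.leaf x)
    rw [List.getLast?_append, hglb'?]
    rfl
  have hlxL2 : N.leaf x ∈ L2 := List.mem_of_getLast? hgl2?
  -- C.r ∈ L1
  have hrL1 : C.r ∈ L1 := by
    have : C.r ∈ N.root :: la := hlast_a ▸ List.getLast_mem _
    rcases List.mem_cons.1 this with h | h
    · exact List.mem_cons.2 (Or.inl h)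
    · exact List.mem_cons.2 (Or.inr (List.mem_append.2 (Or.inl h)))
  -- split L1 at C.r
  obtain ⟨P, Q, hPQ⟩ := List.append_of_mem hrL1
  have hrootL2 : N.root ∈ L2 := List.mem_cons_self
  have hProot : N.root ∈ P := by
    cases hP : P with
    | nil =>
      exfalso
      rw [hP, List.nil_append] at hPQ
      have hrr : N.root = C.r := by
        have := congrArg List.head? hPQ
        simpa [hL1] using this
      exact hrL2 (hrr ▸ hrootL2)
    | cons p P' =>
      rw [hP] at hPQ
      have hrr : N.root = p := by
        have := congrArg List.head? hPQ
        simpa [hL1] using this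
      rw [hrr]
      exact List.mem_cons_self
  have hgQ : (C.r :: Q).getLast? = some (N.leaf x) := by
    have h := hgl1?
    rw [hPQ, List.getLast?_append,
      List.getLast?_eq_getLast (l := C.r :: Q) (List.cons_ne_nil _ _), Option.some_or] at h
    rw [List.getLast?_eq_getLast (l := C.r :: Q) (List.cons_ne_nil _ _)]
    exact h
  have hQx : N.leaf x ∈ Q := by
    cases hQc : Q with
    | nil =>
      exfalso
      rw [hQc] at hgQ
      simp at hgQ
      exact hlx_ne_r hgQ.symm
    | cons q Q' =>
      rw [hQc, List.getLast?_cons_cons] at hgQ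
      exact List.mem_of_getLast? hgQ
  -- find a (last vertex of P in L2) and b (first vertex of Q in L2)
  obtain ⟨P₁, a, P₂, hP, haL2, hP₂⟩ := exists_last_split (· ∈ L2) P ⟨N.root, hProot, hrootL2⟩
  obtain ⟨Q₁, b, Q₂, hQ, hbL2, hQ₁⟩ := exists_first_split (· ∈ L2) Q ⟨N.leaf x, hQx, hlxL2⟩
  have hL1form : L1 = P₁ ++ (a :: (P₂ ++ C.r :: Q₁) ++ [b]) ++ Q₂ := by
    rw [hPQ, hP, hQ]; simp
  have hinf1 : (a :: (P₂ ++ C.r :: Q₁) ++ [b]) <:+: L1 := ⟨P₁, Q₂, hL1form.symm⟩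
  have hch1' : List.Chain' N.adj L1 := hchain1
  have hcyc1 : List.Chain N.adj a ((P₂ ++ C.r :: Q₁) ++ [b]) := hch1'.infix hinf1
  have hcycnd1 : (a :: ((P₂ ++ C.r :: Q₁) ++ [b])).Nodup := hnd1.sublist hinf1.sublist
  have hab : a ≠ b := by
    have := (List.nodup_cons.1 hcycnd1).1
    intro h; exact this (by simp [h])
  -- a → b  (TransGen), via side 1
  have h_a_b : Relation.TransGen N.adj a b := chain_transGen hcyc1 (by simp)
  -- split L2 at a, find b after a
  obtain ⟨U, W, hUW⟩ := List.append_of_mem haL2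
  have hbW : b ∈ W := by
    have hbUW : b ∈ U ++ a :: W := hUW ▸ hbL2
    rcases List.mem_append.1 hbUW with h | h
    · -- b before a in L2 : get b → a, contradiction with a → b
      exfalso
      obtain ⟨U₁, U₂, hU⟩ := List.append_of_mem h
      have hsuf : (b :: (U₂ ++ a :: W)) <:+ L2 := ⟨U₁, by rw [hUW, hU]; simp⟩
      have hch2' : List.Chain' N.adj L2 := hchain2
      have : List.Chain N.adj b (U₂ ++ a :: W) := hch2'.suffix hsuf
      have h_b_a : Relation.TransGen N.adj b a :=
        chain_transGen this (by simp)
      exact N.acyclic a (h_a_b.trans h_b_a)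
    · rcases List.mem_cons.1 h with h | h
      · exact absurd h.symm hab
      · exact h
  obtain ⟨W₁, W₂, hW⟩ := List.append_of_mem hbW
  have hinf2 : (a :: W₁ ++ [b]) <:+: L2 := ⟨U, W₂, by rw [hUW, hW]; simp⟩
  have hch2' : List.Chain' N.adj L2 := hchain2
  have hcyc2 : List.Chain N.adj a (W₁ ++ [b]) := hch2'.infix hinf2
  have hcycnd2 : (a :: (W₁ ++ [b])).Nodup := hnd2.sublist hinf2.sublist
  -- disjointness of the two sides
  have hdisj : ∀ v ∈ P₂ ++ C.r :: Q₁, v ∉ W₁ := by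
    intro v hv hvW
    have hvL2 : v ∈ L2 := by
      rw [hUW, hW]
      simp [hvW]
    rcases List.mem_append.1 hv with h | h
    · exact hP₂ v h hvL2
    rcases List.mem_cons.1 h with rfl | h
    · exact hrL2 hvL2
    · exact hQ₁ v h hvL2
  -- assemble the cycle D
  let D : NCycle N :=
    ⟨a, b, P₂ ++ C.r :: Q₁, W₁, hcyc1, hcyc2, hab, hcycnd1, hcycnd2, hdisj,
      Or.inl (by simp)⟩
  have hrD : C.r ∈ D.verts := by
    simp only [NCycle.verts, Set.mem_union, Set.mem_setOf_eq]
    exact Or.inl (Or.inr (by simp [D]))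
  have hrC : C.r ∈ C.verts := by
    simp [NCycle.verts]
  have hverts : C.verts = D.verts := hN C D C.r hrC hrD
  have haD : a ∈ D.verts := by
    simp [D, NCycle.verts]
  have h_ra : N.reaches C.r a := C.root_reaches (hverts ▸ haD)
  have h_ar : N.reaches a C.r := D.root_reaches hrD
  have hane : a ≠ C.r := fun h => hrL2 (h ▸ haL2)
  rcases Relation.reflTransGen_iff_eq_or_transGen.1 h_ra with h | h
  · exact hane h
  · exact N.acyclic C.r (Relation.TransGen.trans_left h h_ar)

open PhyloNetwork in
/-- In a level-1 network, the root offspring sets `R(C)` of the cycles form a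
hierarchy on `X`: any two of them are nested or disjoint. -/
theorem cycle_root_offspring_hierarchy {X : Type} [Fintype X] [DecidableEq X]
    (N : PhyloNetwork X) (hN : N.IsLevelOne) :
    ∀ C C' : NCycle N,
      C.RC ∩ C'.RC = C.RC ∨ C.RC ∩ C'.RC = C'.RC ∨ C.RC ∩ C'.RC = ∅ := by
  intro C C'
  by_cases h1 : N.reaches C.r C'.r
  · right; left
    ext y
    simp only [Set.mem_inter_iff, NCycle.RC, F, Set.mem_setOf_eq]
    exact ⟨fun h => h.2, fun h => ⟨h1.trans h, h⟩⟩
  by_cases h2 : N.reaches C'.r C.r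
  · left
    ext y
    simp only [Set.mem_inter_iff, NCycle.RC, F, Set.mem_setOf_eq]
    exact ⟨fun h => h.1, fun h => ⟨h, h2.trans h⟩⟩
  · right; right
    ext y
    simp only [Set.mem_inter_iff, NCycle.RC, F, Set.mem_setOf_eq,
      Set.mem_empty_iff_false, iff_false, not_and]
    intro hy1 hy2
    exact key_lemma N hN C C' y h1 h2 hy1 hy2
end
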